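/- arXiv:2305.09547 — 6 statements merged into one kernel-verified Lean document; each statement's English description precedes it below -/
import Mathlib

section
/- Let α ≥ 1 and let z₀,…,z_{n+1} be nonnegative reals with z₀ = z_{n+1} = 0, each zᵢ > 0 for 1 ≤ i ≤ n, and Σᵢzᵢ = 1. Call index i (1 ≤ i ≤ n) significant if (√α·z_{i-1} < zᵢ and √α·zᵢ < z_{i+1}) or (z_{i-1} > √α·zᵢ and zᵢ > √α·z_{i+1}). Then Σ_{i=1}^{n} zᵢ·|zᵢ/(z_{i-1}+zᵢ) − zᵢ/(zᵢ+z_{i+1})|^α ≤ (Σ over significant i of the same summand) + (1 − 1/(1+√α))^α. -/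
open Real Finset

lemma aux7 (s a b c : ℝ) (hs : 1 ≤ s) (ha : 0 ≤ a) (hb : 0 < b) (hc : 0 ≤ c)
    (h : ¬((s * a < b ∧ s * b < c) ∨ (a > s * b ∧ b > s * c))) :
    |b / (a + b) - b / (b + c)| ≤ 1 - 1 / (1 + s) := by
  push_neg at h
  obtain ⟨h1, h2⟩ := h
  have hab : 0 < a + b := by linarith
  have hbc : 0 < b + c := by linarith
  have hs0 : 0 < 1 + s := by linarith
  have hB : 1 - 1 / (1 + s) = s / (1 + s) := by field_simp; ring
  rw [hB, abs_le]
  have hs0' : (0:ℝ) ≤ s := le_trans zero_le_one hs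
  have key1 : b * (c - a) * (1 + s) ≤ s * ((a + b) * (b + c)) := by
    rcases le_or_gt b (s * a) with hcase | hcase
    · nlinarith [mul_nonneg (sub_nonneg.2 hcase) hc,
        mul_nonneg (mul_nonneg hs0' ha) hb.le,
        mul_nonneg (mul_nonneg hs0' hb.le) hb.le, mul_nonneg ha hb.le]
    · have hcb := h1 hcase
      nlinarith [mul_nonneg (sub_nonneg.2 hcb) hb.le,
        mul_nonneg (mul_nonneg hs0' ha) hb.le,
        mul_nonneg (mul_nonneg hs0' ha) hc, mul_nonneg ha hb.le]
  have key2 : b * (a - c) * (1 + s) ≤ s * ((a + b) * (b + c)) := by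
    rcases le_or_gt a (s * b) with hcase | hcase
    · nlinarith [mul_nonneg (sub_nonneg.2 hcase) hb.le,
        mul_nonneg (mul_nonneg hs0' ha) hc,
        mul_nonneg (mul_nonneg hs0' hb.le) hc, mul_nonneg hb.le hc]
    · have hbc2 := h2 hcase
      nlinarith [mul_nonneg (sub_nonneg.2 hbc2) ha,
        mul_nonneg (mul_nonneg hs0' hb.le) hb.le,
        mul_nonneg (mul_nonneg hs0' hb.le) hc, mul_nonneg hb.le hc]
  constructor
  · rw [neg_le, neg_sub, div_sub_div _ _ hbc.ne' hab.ne',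
      div_le_div_iff₀ (mul_pos hbc hab) hs0]
    nlinarith [key2]
  · rw [div_sub_div _ _ hab.ne' hbc.ne', div_le_div_iff₀ (mul_pos hab hbc) hs0]
    nlinarith [key1]

open scoped Classical in
theorem stmt7 (α : ℝ) (hα : 1 ≤ α) (n : ℕ) (hn : 1 ≤ n) (z : ℕ → ℝ)
    (h0 : z 0 = 0) (hend : z (n + 1) = 0)
    (hpos : ∀ i, 1 ≤ i → i ≤ n → 0 < z i)
    (hsum : ∑ i ∈ Finset.Icc 1 n, z i = 1) :
    ∑ i ∈ Finset.Icc 1 n,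
        z i * |z i / (z (i - 1) + z i) - z i / (z i + z (i + 1))| ^ α
      ≤ (∑ i ∈ (Finset.Icc 1 n).filter
            (fun i => (Real.sqrt α * z (i - 1) < z i ∧ Real.sqrt α * z i < z (i + 1)) ∨
                      (z (i - 1) > Real.sqrt α * z i ∧ z i > Real.sqrt α * z (i + 1))),
          z i * |z i / (z (i - 1) + z i) - z i / (z i + z (i + 1))| ^ α)
        + (1 - 1 / (1 + Real.sqrt α)) ^ α := by
  set s := Real.sqrt α with hsdef
  have hs : 1 ≤ s := Real.one_le_sqrt.2 hα
  have hα0 : 0 ≤ α := le_trans zero_le_one hα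
  have hB0 : 0 ≤ 1 - 1 / (1 + s) := by
    have : 1 / (1 + s) ≤ 1 := by
      rw [div_le_one (by linarith)]; linarith
    linarith
  have hznn : ∀ j, j ≤ n + 1 → 0 ≤ z j := by
    intro j hj
    rcases Nat.eq_zero_or_pos j with rfl | hj1
    · exact h0.ge
    · rcases eq_or_lt_of_le hj with rfl | hj2
      · exact hend.ge
      · exact (hpos j hj1 (by omega)).le
  set p := fun i => (s * z (i - 1) < z i ∧ s * z i < z (i + 1)) ∨
      (z (i - 1) > s * z i ∧ z i > s * z (i + 1)) with hp
  rw [← Finset.sum_filter_add_sum_filter_not (Finset.Icc 1 n) p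
      (fun i => z i * |z i / (z (i - 1) + z i) - z i / (z i + z (i + 1))| ^ α)]
  refine add_le_add le_rfl ?_
  calc ∑ i ∈ (Finset.Icc 1 n).filter (fun i => ¬ p i),
          z i * |z i / (z (i - 1) + z i) - z i / (z i + z (i + 1))| ^ α
        ≤ ∑ i ∈ (Finset.Icc 1 n).filter (fun i => ¬ p i),
          z i * (1 - 1 / (1 + s)) ^ α := by
          apply Finset.sum_le_sum
          intro i hi
          rw [Finset.mem_filter, Finset.mem_Icc] at hi
          obtain ⟨⟨hi1, hi2⟩, hnp⟩ := hi
          have hbpos := hpos i hi1 hi2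
          have ha : 0 ≤ z (i - 1) := hznn _ (by omega)
          have hc : 0 ≤ z (i + 1) := hznn _ (by omega)
          have hbound := aux7 s (z (i - 1)) (z i) (z (i + 1)) hs ha hbpos hc hnp
          exact mul_le_mul_of_nonneg_left
            (Real.rpow_le_rpow (abs_nonneg _) hbound hα0) hbpos.le
    _ ≤ (1 - 1 / (1 + s)) ^ α := by
          rw [← Finset.sum_mul]
          have hle : ∑ i ∈ (Finset.Icc 1 n).filter (fun i => ¬ p i), z i ≤ 1 := by
            rw [← hsum]
            apply Finset.sum_le_sum_of_subset_of_nonneg (Finset.filter_subset _ _)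
            intro i hi _
            rw [Finset.mem_Icc] at hi
            exact hznn i (by omega)
          nlinarith [Real.rpow_nonneg hB0 α]
end

section
/- Let m be a probability measure on [0,1]² and suppose m = μ + ν where μ, ν are nonnegative Borel measures on [0,1]² satisfying: for all Borel A, B ⊆ [0,1], ∫_A (1−x) dμˣ = ∫_A x dνˣ and ∫_B (1−y) dμʸ = ∫_B y dνʸ (where μˣ, νˣ denote first-coordinate marginals and μʸ, νʸ second-coordinate marginals). Then m is coherent, i.e., there exists a probability space carrying a random vector (X,Y) with law m and a random variable Z ∈ [0,1] such that X = E(Z|X) and Y = E(Z|Y) almost surely. -/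
open MeasureTheory Set

/-- A probability measure on `ℝ × ℝ` (thought of as supported on `[0,1]²`) is *coherent*
if it is the joint law of a random vector `(X, Y)` such that `X = 𝔼(Z|X)` and
`Y = 𝔼(Z|Y)` almost surely, for some random variable `Z` with values in `[0,1]`. -/
def IsCoherent (m : Measure (ℝ × ℝ)) : Prop :=
  ∃ (Ω : Type) (_mΩ : MeasurableSpace Ω) (P : Measure Ω) (_ : IsProbabilityMeasure P)
    (X Y Z : Ω → ℝ),
      Measurable X ∧ Measurable Y ∧ Measurable Z ∧
      (∀ ω, Z ω ∈ Set.Icc (0 : ℝ) 1) ∧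
      Measure.map (fun ω => (X ω, Y ω)) P = m ∧
      X =ᵐ[P] P[Z | MeasurableSpace.comap X (borel ℝ)] ∧
      Y =ᵐ[P] P[Z | MeasurableSpace.comap Y (borel ℝ)]

/-- The pair `(μ, ν)` of nonnegative Borel measures belongs to the class `R`:
`∫_A (1-x) dμˣ = ∫_A x dνˣ` and `∫_B (1-y) dμʸ = ∫_B y dνʸ` for all Borel `A, B`. -/
def MemR (μ ν : Measure (ℝ × ℝ)) : Prop :=
  ∀ A : Set ℝ, MeasurableSet A →
    (∫ x in A, (1 - x) ∂(μ.map Prod.fst) = ∫ x in A, x ∂(ν.map Prod.fst)) ∧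
    (∫ y in A, (1 - y) ∂(μ.map Prod.snd) = ∫ y in A, y ∂(ν.map Prod.snd))


section Aux

abbrev Om : Type := (ℝ × ℝ) ⊕ (ℝ × ℝ)

noncomputable def Pm (μ ν : Measure (ℝ × ℝ)) : Measure Om :=
  μ.map Sum.inl + ν.map Sum.inr

def Zf : Om → ℝ := Sum.elim (fun _ => (1:ℝ)) (fun _ => (0:ℝ))

lemma Zf_meas : Measurable Zf := Measurable.sumElim measurable_const measurable_const

lemma Zf_mem (ω : Om) : Zf ω ∈ Icc (0:ℝ) 1 := by
  cases ω <;> simp [Zf]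

lemma condexp_aux (μ ν : Measure (ℝ × ℝ)) [IsFiniteMeasure μ] [IsFiniteMeasure ν]
    (π : ℝ × ℝ → ℝ) (hπ : Measurable π)
    (hμs : (μ.map π) (Icc (0:ℝ) 1)ᶜ = 0) (hνs : (ν.map π) (Icc (0:ℝ) 1)ᶜ = 0)
    (hint : ∀ A : Set ℝ, MeasurableSet A →
      ∫ x in A, (1 - x) ∂(μ.map π) = ∫ x in A, x ∂(ν.map π)) :
    Sum.elim π π =ᵐ[Pm μ ν] (Pm μ ν)[Zf | MeasurableSpace.comap (Sum.elim π π) (borel ℝ)] := by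
  set W : Om → ℝ := Sum.elim π π with hWdef
  have hW : Measurable W := hπ.sumElim hπ
  have hm : MeasurableSpace.comap W (borel ℝ) ≤ (inferInstance : MeasurableSpace Om) :=
    hW.comap_le
  haveI : IsFiniteMeasure (Pm μ ν) := by
    constructor
    simp only [Pm, Measure.add_toOuterMeasure, Measure.coe_add, Pi.add_apply]
    rw [Measure.map_apply measurable_inl MeasurableSet.univ,
        Measure.map_apply measurable_inr MeasurableSet.univ]
    exact ENNReal.add_lt_top.2 ⟨measure_lt_top _ _, measure_lt_top _ _⟩
  haveI : SigmaFinite ((Pm μ ν).trim hm) := (isFiniteMeasure_trim hm).toSigmaFinite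
  -- W ∈ [0,1] a.e.
  have hWsupp : (Pm μ ν) (W ⁻¹' (Icc (0:ℝ) 1)ᶜ) = 0 := by
    have hms : MeasurableSet ((Icc (0:ℝ) 1)ᶜ) := measurableSet_Icc.compl
    simp only [Pm, Measure.coe_add, Pi.add_apply]
    rw [Measure.map_apply measurable_inl (hW hms), Measure.map_apply measurable_inr (hW hms)]
    have h1 : Sum.inl ⁻¹' (W ⁻¹' (Icc (0:ℝ) 1)ᶜ) = π ⁻¹' (Icc (0:ℝ) 1)ᶜ := rfl
    have h2 : Sum.inr ⁻¹' (W ⁻¹' (Icc (0:ℝ) 1)ᶜ) = π ⁻¹' (Icc (0:ℝ) 1)ᶜ := rfl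
    rw [h1, h2, ← Measure.map_apply hπ hms, ← Measure.map_apply hπ hms, hμs, hνs, add_zero]
  have hWae : ∀ᵐ ω ∂(Pm μ ν), W ω ∈ Icc (0:ℝ) 1 := by
    rw [ae_iff]
    exact hWsupp
  have hWint : Integrable W (Pm μ ν) := by
    refine Integrable.mono' (integrable_const 1) hW.aestronglyMeasurable ?_
    filter_upwards [hWae] with ω hω
    rw [Real.norm_eq_abs, abs_le]
    exact ⟨le_trans (by norm_num) hω.1, hω.2⟩
  have hZint : Integrable Zf (Pm μ ν) := by
    refine Integrable.mono' (integrable_const 1) Zf_meas.aestronglyMeasurable ?_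
    refine ae_of_all _ fun ω => ?_
    rw [Real.norm_eq_abs, abs_le]
    exact ⟨le_trans (by norm_num) (Zf_mem ω).1, (Zf_mem ω).2⟩
  refine ae_eq_condExp_of_forall_setIntegral_eq hm hZint
    (fun s _ _ => hWint.integrableOn) ?_ ?_
  · -- the set-integral equality
    intro s hs _
    obtain ⟨A, hA, rfl⟩ := hs
    have hA' : MeasurableSet A := hA
    have hsA : MeasurableSet (W ⁻¹' A) := hW hA'
    -- integrability on each piece
    have hle1 : μ.map Sum.inl ≤ Pm μ ν := Measure.le_add_right le_rfl
    have hle2 : ν.map Sum.inr ≤ Pm μ ν := Measure.le_add_left le_rfl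
    have hWint1 : IntegrableOn W (W ⁻¹' A) (μ.map Sum.inl) :=
      hWint.integrableOn.mono_measure hle1
    have hWint2 : IntegrableOn W (W ⁻¹' A) (ν.map Sum.inr) :=
      hWint.integrableOn.mono_measure hle2
    have hZint1 : IntegrableOn Zf (W ⁻¹' A) (μ.map Sum.inl) :=
      hZint.integrableOn.mono_measure hle1
    have hZint2 : IntegrableOn Zf (W ⁻¹' A) (ν.map Sum.inr) :=
      hZint.integrableOn.mono_measure hle2
    have hrest : (Pm μ ν).restrict (W ⁻¹' A)
        = (μ.map Sum.inl).restrict (W ⁻¹' A) + (ν.map Sum.inr).restrict (W ⁻¹' A) :=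
      Measure.restrict_add _ _ _
    -- compute the four integrals
    have e1 : ∫ x in W ⁻¹' A, W x ∂(μ.map Sum.inl) = ∫ x in A, x ∂(μ.map π) := by
      rw [setIntegral_map hsA hW.aestronglyMeasurable measurable_inl.aemeasurable]
      have : Sum.inl ⁻¹' (W ⁻¹' A) = π ⁻¹' A := rfl
      rw [this]
      rw [setIntegral_map (f := fun x : ℝ => x) hA' measurable_id.aestronglyMeasurable hπ.aemeasurable]
      rfl
    have e2 : ∫ x in W ⁻¹' A, W x ∂(ν.map Sum.inr) = ∫ x in A, x ∂(ν.map π) := by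
      rw [setIntegral_map hsA hW.aestronglyMeasurable measurable_inr.aemeasurable]
      have : Sum.inr ⁻¹' (W ⁻¹' A) = π ⁻¹' A := rfl
      rw [this]
      rw [setIntegral_map (f := fun x : ℝ => x) hA' measurable_id.aestronglyMeasurable hπ.aemeasurable]
      rfl
    have e3 : ∫ x in W ⁻¹' A, Zf x ∂(μ.map Sum.inl) = ((μ.map π) A).toReal := by
      rw [setIntegral_map hsA Zf_meas.aestronglyMeasurable measurable_inl.aemeasurable]
      have : ∀ x : ℝ × ℝ, Zf (Sum.inl x) = 1 := fun x => rfl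
      simp only [this, integral_const, smul_eq_mul, mul_one]
      rw [measureReal_def, Measure.restrict_apply_univ, show Sum.inl ⁻¹' (W ⁻¹' A) = π ⁻¹' A from rfl,
        ← Measure.map_apply hπ hA']
    have e4 : ∫ x in W ⁻¹' A, Zf x ∂(ν.map Sum.inr) = 0 := by
      rw [setIntegral_map hsA Zf_meas.aestronglyMeasurable measurable_inr.aemeasurable]
      have : ∀ x : ℝ × ℝ, Zf (Sum.inr x) = 0 := fun x => rfl
      simp [this]
    have hL : ∫ x in W ⁻¹' A, W x ∂(Pm μ ν)
        = ∫ x in A, x ∂(μ.map π) + ∫ x in A, x ∂(ν.map π) := by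
      rw [← e1, ← e2, hrest, integral_add_measure hWint1 hWint2]
    have hRq : ∫ x in W ⁻¹' A, Zf x ∂(Pm μ ν) = ((μ.map π) A).toReal := by
      rw [hrest, integral_add_measure hZint1 hZint2, e3, e4, add_zero]
    rw [hL, hRq]
    -- now the measure-theoretic identity
    have hμint : IntegrableOn (fun x : ℝ => x) A (μ.map π) := by
      refine Integrable.mono' (integrable_const 1) aestronglyMeasurable_id ?_
      have : ∀ᵐ x ∂(μ.map π), x ∈ Icc (0:ℝ) 1 := by
        rw [ae_iff]; exact hμs
      exact ae_restrict_of_ae <| by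
        filter_upwards [this] with x hx
        rw [Real.norm_eq_abs, abs_le]; exact ⟨le_trans (by norm_num) hx.1, hx.2⟩
    have hμint1 : IntegrableOn (fun x : ℝ => 1 - x) A (μ.map π) :=
      (integrable_const 1).integrableOn.sub hμint
    calc ∫ x in A, x ∂(μ.map π) + ∫ x in A, x ∂(ν.map π)
        = ∫ x in A, x ∂(μ.map π) + ∫ x in A, (1 - x) ∂(μ.map π) := by rw [← hint A hA']
      _ = ∫ x in A, (x + (1 - x)) ∂(μ.map π) := (integral_add hμint hμint1).symm
      _ = ∫ x in A, (1:ℝ) ∂(μ.map π) := by norm_num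
      _ = ((μ.map π) A).toReal := by
            rw [setIntegral_const, smul_eq_mul, mul_one, measureReal_def]
  · -- strong measurability wrt comap
    refine ⟨W, ?_, ae_eq_refl _⟩
    have hWm : Measurable[MeasurableSpace.comap W (borel ℝ)] W := fun A hA => ⟨A, hA, rfl⟩
    exact hWm.stronglyMeasurable

end Aux

theorem stmt9 (m μ ν : Measure (ℝ × ℝ)) [IsProbabilityMeasure m]
    (hsupp : m (Icc (0:ℝ) 1 ×ˢ Icc (0:ℝ) 1)ᶜ = 0)
    (hdecomp : m = μ + ν) (hR : MemR μ ν) :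
    IsCoherent m := by
  have hμle : μ ≤ m := hdecomp ▸ Measure.le_add_right le_rfl
  have hνle : ν ≤ m := hdecomp ▸ Measure.le_add_left le_rfl
  haveI : IsFiniteMeasure μ :=
    ⟨lt_of_le_of_lt (hμle univ) (by simp)⟩
  haveI : IsFiniteMeasure ν :=
    ⟨lt_of_le_of_lt (hνle univ) (by simp)⟩
  -- support of marginals
  have hsub1 : Prod.fst ⁻¹' (Icc (0:ℝ) 1)ᶜ ⊆ (Icc (0:ℝ) 1 ×ˢ Icc (0:ℝ) 1)ᶜ :=
    fun p hp hmem => hp hmem.1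
  have hsub2 : Prod.snd ⁻¹' (Icc (0:ℝ) 1)ᶜ ⊆ (Icc (0:ℝ) 1 ×ˢ Icc (0:ℝ) 1)ᶜ :=
    fun p hp hmem => hp hmem.2
  have hIccc : MeasurableSet ((Icc (0:ℝ) 1)ᶜ) := measurableSet_Icc.compl
  have hmarg : ∀ (ρ : Measure (ℝ × ℝ)), ρ ≤ m →
      (ρ.map Prod.fst) (Icc (0:ℝ) 1)ᶜ = 0 ∧ (ρ.map Prod.snd) (Icc (0:ℝ) 1)ᶜ = 0 := by
    intro ρ hρ
    constructor
    · rw [Measure.map_apply measurable_fst hIccc]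
      exact le_antisymm (le_trans (le_trans (measure_mono hsub1) (hρ _)) hsupp.le) zero_le
    · rw [Measure.map_apply measurable_snd hIccc]
      exact le_antisymm (le_trans (le_trans (measure_mono hsub2) (hρ _)) hsupp.le) zero_le
  haveI hP : IsProbabilityMeasure (Pm μ ν) := by
    constructor
    simp only [Pm, Measure.coe_add, Pi.add_apply]
    rw [Measure.map_apply measurable_inl MeasurableSet.univ,
        Measure.map_apply measurable_inr MeasurableSet.univ]
    have : m univ = 1 := measure_univ
    rw [hdecomp] at this
    simpa using this
  refine ⟨Om, inferInstance, Pm μ ν, hP,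
    Sum.elim Prod.fst Prod.fst, Sum.elim Prod.snd Prod.snd, Zf,
    measurable_fst.sumElim measurable_fst, measurable_snd.sumElim measurable_snd,
    Zf_meas, Zf_mem, ?_, ?_, ?_⟩
  · -- law
    have hg : (fun ω : Om => (Sum.elim Prod.fst Prod.fst ω, Sum.elim Prod.snd Prod.snd ω))
        = Sum.elim id id := by
      funext ω; cases ω <;> rfl
    rw [hg]
    have hgm : Measurable (Sum.elim (id : ℝ × ℝ → ℝ × ℝ) id) :=
      measurable_id.sumElim measurable_id
    simp only [Pm]
    rw [Measure.map_add _ _ hgm, Measure.map_map hgm measurable_inl,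
        Measure.map_map hgm measurable_inr, Sum.elim_comp_inl, Sum.elim_comp_inr,
        Measure.map_id, Measure.map_id, hdecomp]
  · exact condexp_aux μ ν Prod.fst measurable_fst (hmarg μ hμle).1 (hmarg ν hνle).1
      (fun A hA => (hR A hA).1)
  · exact condexp_aux μ ν Prod.snd measurable_snd (hmarg μ hμle).2 (hmarg ν hνle).2
      (fun A hA => (hR A hA).2)
end

section
/- Let m be a coherent probability measure on [0,1]², i.e., m is the joint law of (X,Y) with X = E(Z|X), Y = E(Z|Y) a.s. for some random variable Z ∈ [0,1]. Define μ(C) = ∫_{(X,Y)∈C} Z dP and ν(C) = ∫_{(X,Y)∈C} (1−Z) dP for Borel C ⊆ [0,1]². Then m = μ + ν and for every Borel A ⊆ [0,1], ∫_A (1−x) dμˣ = ∫_A x dνˣ, where μˣ, νˣ are the first-coordinate marginals. -/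
open MeasureTheory Set
open scoped NNReal ENNReal

lemma integral_withDensity_ofReal' {Ω : Type} [MeasurableSpace Ω] (P : Measure Ω)
    (Z : Ω → ℝ) (hZ : Measurable Z) (hZ0 : ∀ ω, 0 ≤ Z ω) (f : Ω → ℝ) :
    ∫ ω, f ω ∂(P.withDensity fun ω => ENNReal.ofReal (Z ω)) = ∫ ω, Z ω * f ω ∂P := by
  have h : (fun ω => ENNReal.ofReal (Z ω)) = fun ω => ((Real.toNNReal (Z ω) : ℝ≥0) : ℝ≥0∞) :=
    rfl
  rw [h, integral_withDensity_eq_integral_smul hZ.real_toNNReal]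
  congr 1
  ext ω
  simp [NNReal.smul_def, Real.coe_toNNReal _ (hZ0 ω)]

lemma marginal_setIntegral {Ω : Type} [MeasurableSpace Ω] (P : Measure Ω)
    (X W : Ω → ℝ) (hX : Measurable X) (hW : Measurable W) (hW0 : ∀ ω, 0 ≤ W ω)
    (f : ℝ → ℝ) (hf : Continuous f) {A : Set ℝ} (hA : MeasurableSet A) :
    ∫ x in A, f x ∂(Measure.map X (P.withDensity fun ω => ENNReal.ofReal (W ω)))
      = ∫ ω in X ⁻¹' A, W ω * f (X ω) ∂P := by
  rw [setIntegral_map hA (hf.aestronglyMeasurable) hX.aemeasurable,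
    restrict_withDensity (hX hA),
    integral_withDensity_ofReal' (P.restrict (X ⁻¹' A)) W hW hW0]

theorem stmt10
    (Ω : Type) (mΩ : MeasurableSpace Ω) (P : Measure Ω) [IsProbabilityMeasure P]
    (X Y Z : Ω → ℝ) (hX : Measurable X) (hY : Measurable Y) (hZ : Measurable Z)
    (hZ01 : ∀ ω, Z ω ∈ Set.Icc (0 : ℝ) 1)
    (hXZ : X =ᵐ[P] P[Z | MeasurableSpace.comap X (borel ℝ)])
    (hYZ : Y =ᵐ[P] P[Z | MeasurableSpace.comap Y (borel ℝ)])
    (m μ ν : Measure (ℝ × ℝ))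
    (hm : m = Measure.map (fun ω => (X ω, Y ω)) P)
    (hμ : μ = Measure.map (fun ω => (X ω, Y ω))
            (P.withDensity (fun ω => ENNReal.ofReal (Z ω))))
    (hν : ν = Measure.map (fun ω => (X ω, Y ω))
            (P.withDensity (fun ω => ENNReal.ofReal (1 - Z ω)))) :
    m = μ + ν ∧
    ∀ A : Set ℝ, MeasurableSet A →
      ∫ x in A, (1 - x) ∂(μ.map Prod.fst) = ∫ x in A, x ∂(ν.map Prod.fst) := by
  have hZ0 : ∀ ω, 0 ≤ Z ω := fun ω => (hZ01 ω).1
  have hZ1 : ∀ ω, Z ω ≤ 1 := fun ω => (hZ01 ω).2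
  have hZ0' : ∀ ω, 0 ≤ 1 - Z ω := fun ω => by linarith [hZ1 ω]
  have hXY : Measurable fun ω => (X ω, Y ω) := hX.prodMk hY
  have hdens : P.withDensity (fun ω => ENNReal.ofReal (Z ω)) +
      P.withDensity (fun ω => ENNReal.ofReal (1 - Z ω)) = P := by
    rw [← withDensity_add_left (hZ.ennreal_ofReal)]
    have h1 : ((fun ω => ENNReal.ofReal (Z ω)) + fun ω => ENNReal.ofReal (1 - Z ω)) =
        fun _ => (1 : ℝ≥0∞) := by
      funext ω
      simp only [Pi.add_apply]
      rw [← ENNReal.ofReal_add (hZ0 ω) (hZ0' ω)]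
      norm_num
    rw [h1]; exact withDensity_one
  constructor
  · rw [hm, hμ, hν, ← Measure.map_add _ _ hXY, hdens]
  · intro A hA
    have hμfst : μ.map Prod.fst
        = Measure.map X (P.withDensity fun ω => ENNReal.ofReal (Z ω)) := by
      rw [hμ, Measure.map_map measurable_fst hXY]; rfl
    have hνfst : ν.map Prod.fst
        = Measure.map X (P.withDensity fun ω => ENNReal.ofReal (1 - Z ω)) := by
      rw [hν, Measure.map_map measurable_fst hXY]; rfl
    set S := X ⁻¹' A with hSdef
    have hS : MeasurableSet S := hX hA
    have hZint : Integrable Z P := by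
      refine Integrable.mono' (integrable_const (1 : ℝ)) hZ.aestronglyMeasurable ?_
      filter_upwards with ω
      rw [Real.norm_eq_abs, abs_of_nonneg (hZ0 ω)]; exact hZ1 ω
    have hXint : Integrable X P := integrable_condExp.congr hXZ.symm
    have hZXint : Integrable (fun ω => Z ω * X ω) P := by
      refine Integrable.mono' hXint.abs ((hZ.mul hX).aestronglyMeasurable) ?_
      filter_upwards with ω
      rw [Real.norm_eq_abs, abs_mul]
      calc |Z ω| * |X ω| ≤ 1 * |X ω| := by
            apply mul_le_mul_of_nonneg_right _ (abs_nonneg _)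
            rw [abs_of_nonneg (hZ0 ω)]; exact hZ1 ω
        _ = |X ω| := one_mul _
    have hle : MeasurableSpace.comap X (borel ℝ) ≤ mΩ := hX.comap_le
    have hSm : MeasurableSet[MeasurableSpace.comap X (borel ℝ)] S := ⟨A, hA, rfl⟩
    have key : ∫ ω in S, X ω ∂P = ∫ ω in S, Z ω ∂P := by
      calc ∫ ω in S, X ω ∂P
          = ∫ ω in S, (P[Z | MeasurableSpace.comap X (borel ℝ)]) ω ∂P :=
            setIntegral_congr_ae hS (hXZ.mono fun ω h _ => h)
        _ = ∫ ω in S, Z ω ∂P := setIntegral_condExp hle hZint hSm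
    have hL : ∫ x in A, (1 - x) ∂(μ.map Prod.fst) = ∫ ω in S, Z ω * (1 - X ω) ∂P := by
      rw [hμfst]
      exact marginal_setIntegral P X Z hX hZ hZ0 (fun x => 1 - x)
        (continuous_const.sub continuous_id) hA
    have hR : ∫ x in A, x ∂(ν.map Prod.fst) = ∫ ω in S, (1 - Z ω) * X ω ∂P := by
      rw [hνfst]
      exact marginal_setIntegral P X (fun ω => 1 - Z ω) hX (measurable_const.sub hZ) hZ0'
        (fun x => x) continuous_id hA
    rw [hL, hR]
    have e1 : ∫ ω in S, Z ω * (1 - X ω) ∂P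
        = (∫ ω in S, Z ω ∂P) - ∫ ω in S, Z ω * X ω ∂P := by
      rw [← integral_sub hZint.restrict hZXint.restrict]
      congr 1; funext ω; ring
    have e2 : ∫ ω in S, (1 - Z ω) * X ω ∂P
        = (∫ ω in S, X ω ∂P) - ∫ ω in S, Z ω * X ω ∂P := by
      rw [← integral_sub hXint.restrict hZXint.restrict]
      congr 1; funext ω; ring
    rw [e1, e2, key]
end

section
/- Let m be a coherent probability measure whose representation is unique and minimal. Then m is an extreme point of the convex set C of coherent distributions: if m = β·m₁ + (1−β)·m₂ with m₁, m₂ ∈ C and β ∈ (0,1), then m₁ = m₂ = m. -/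
open MeasureTheory Set

/-- key one-coordinate computation -/
lemma coord_eq {Ω : Type} [mΩ : MeasurableSpace Ω] (P : Measure Ω) [IsProbabilityMeasure P]
    (X Z : Ω → ℝ) (hX : Measurable X) (hZ : Measurable Z)
    (hZ01 : ∀ ω, Z ω ∈ Set.Icc (0:ℝ) 1)
    (hXc : X =ᵐ[P] P[Z | MeasurableSpace.comap X (borel ℝ)])
    (A : Set ℝ) (hA : MeasurableSet A) :
    ∫ x in A, (1 - x)
        ∂(((P.withDensity fun ω => ((Z ω).toNNReal : ENNReal)).map X))
      = ∫ x in A, x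
        ∂(((P.withDensity fun ω => ((1 - Z ω).toNNReal : ENNReal)).map X)) := by
  have hf : Measurable fun ω => (Z ω).toNNReal := hZ.real_toNNReal
  have hg : Measurable fun ω => (1 - Z ω).toNNReal := (measurable_const.sub hZ).real_toNNReal
  have hmX : MeasurableSpace.comap X (borel ℝ) ≤ mΩ := by
    rw [← BorelSpace.measurable_eq]; exact measurable_iff_comap_le.mp hX
  haveI : SigmaFinite (P.trim hmX) := by
    have : IsFiniteMeasure (P.trim hmX) := isFiniteMeasure_trim hmX
    infer_instance
  have hZint : Integrable Z P := by
    refine Integrable.mono' (integrable_const 1) hZ.aestronglyMeasurable ?_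
    exact Filter.Eventually.of_forall fun ω => by
      rcases hZ01 ω with ⟨h0, h1⟩; rw [Real.norm_eq_abs, abs_of_nonneg h0]; exact h1
  have hXint : Integrable X P := integrable_condExp.congr hXc.symm
  have hZXint : Integrable (fun ω => Z ω * X ω) P := by
    refine hXint.bdd_mul (c := 1) hZ.aestronglyMeasurable (Filter.Eventually.of_forall fun ω => ?_)
    rcases hZ01 ω with ⟨h0, h1⟩
    rw [Real.norm_eq_abs, abs_of_nonneg h0]; exact h1
  have hsA : MeasurableSet (X ⁻¹' A) := hX hA
  have hsA' : MeasurableSet[MeasurableSpace.comap X (borel ℝ)] (X ⁻¹' A) :=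
    ⟨A, by rw [← BorelSpace.measurable_eq]; exact hA, rfl⟩
  have hkey : ∫ ω in X ⁻¹' A, X ω ∂P = ∫ ω in X ⁻¹' A, Z ω ∂P := by
    rw [setIntegral_congr_ae hsA (hXc.mono fun ω h _ => h)]
    exact setIntegral_condExp hmX hZint hsA'
  rw [setIntegral_map hA (by fun_prop) hX.aemeasurable,
      setIntegral_map (f := fun x : ℝ => x) hA aestronglyMeasurable_id hX.aemeasurable,
      restrict_withDensity hsA, restrict_withDensity hsA,
      integral_withDensity_eq_integral_smul (hf) _,
      integral_withDensity_eq_integral_smul (hg) _]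
  have e1 : ∀ ω, (Z ω).toNNReal • (1 - X ω) = Z ω - Z ω * X ω := by
    intro ω
    rw [NNReal.smul_def, Real.coe_toNNReal _ (hZ01 ω).1, smul_eq_mul]; ring
  have e2 : ∀ ω, (1 - Z ω).toNNReal • X ω = X ω - Z ω * X ω := by
    intro ω
    rw [NNReal.smul_def, Real.coe_toNNReal _ (by linarith [(hZ01 ω).2]), smul_eq_mul]; ring
  simp only [e1, e2]
  rw [integral_sub hZint.integrableOn hZXint.integrableOn,
      integral_sub hXint.integrableOn hZXint.integrableOn, hkey]

lemma exists_rep (m : Measure (ℝ × ℝ)) (h : IsCoherent m) :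
    ∃ μ ν : Measure (ℝ × ℝ), MemR μ ν ∧ μ + ν = m ∧
      (∀ᵐ p ∂m, p.1 ∈ Icc (0:ℝ) 1 ∧ p.2 ∈ Icc (0:ℝ) 1) := by
  obtain ⟨Ω, mΩ, P, hP, X, Y, Z, hX, hY, hZ, hZ01, hmap, hXc, hYc⟩ := h
  haveI := hP
  set T : Ω → ℝ × ℝ := fun ω => (X ω, Y ω) with hT
  have hTm : Measurable T := hX.prodMk hY
  refine ⟨(P.withDensity fun ω => ((Z ω).toNNReal : ENNReal)).map T,
          (P.withDensity fun ω => ((1 - Z ω).toNNReal : ENNReal)).map T, ?_, ?_, ?_⟩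
  · intro A hA
    constructor
    · have h1 := coord_eq P X Z hX hZ hZ01 hXc A hA
      rw [Measure.map_map measurable_fst hTm, Measure.map_map measurable_fst hTm]
      exact h1
    · have h1 := coord_eq P Y Z hY hZ hZ01 hYc A hA
      rw [Measure.map_map measurable_snd hTm, Measure.map_map measurable_snd hTm]
      exact h1
  · rw [← Measure.map_add _ _ hTm, ← withDensity_add_left (hZ.real_toNNReal.coe_nnreal_ennreal)]
    have : ((fun ω => ((Z ω).toNNReal : ENNReal)) + fun ω => ((1 - Z ω).toNNReal : ENNReal))
        = (1 : Ω → ENNReal) := by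
      funext ω
      have h0 := (hZ01 ω).1
      have h1 := (hZ01 ω).2
      show ENNReal.ofReal (Z ω) + ENNReal.ofReal (1 - Z ω) = 1
      rw [← ENNReal.ofReal_add h0 (by linarith)]
      norm_num
    rw [this, withDensity_one, hmap]
  · -- support
    have hmX : MeasurableSpace.comap X (borel ℝ) ≤ mΩ := by
      rw [← BorelSpace.measurable_eq]; exact measurable_iff_comap_le.mp hX
    have hmY : MeasurableSpace.comap Y (borel ℝ) ≤ mΩ := by
      rw [← BorelSpace.measurable_eq]; exact measurable_iff_comap_le.mp hY
    have hZint : Integrable Z P := by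
      refine Integrable.mono' (integrable_const 1) hZ.aestronglyMeasurable ?_
      exact Filter.Eventually.of_forall fun ω => by
        rcases hZ01 ω with ⟨h0, h1⟩; rw [Real.norm_eq_abs, abs_of_nonneg h0]; exact h1
    have bnd : ∀ (mX : MeasurableSpace Ω), mX ≤ mΩ → ∀ W : Ω → ℝ, (W =ᵐ[P] P[Z | mX]) →
        ∀ᵐ ω ∂P, W ω ∈ Icc (0:ℝ) 1 := by
      intro mX hmle W hW
      have h0 : 0 ≤ᵐ[P] P[Z|mX] := condExp_nonneg (Filter.Eventually.of_forall fun ω => (hZ01 ω).1)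
      have h1 : P[Z|mX] ≤ᵐ[P] fun _ => (1:ℝ) := by
        have := condExp_mono (m := mX) hZint (integrable_const 1)
          (Filter.Eventually.of_forall fun ω => (hZ01 ω).2)
        rwa [condExp_const hmle] at this
      filter_upwards [h0, h1, hW] with ω a b c
      exact ⟨c ▸ a, c ▸ b⟩
    have hXb := bnd _ hmX X hXc
    have hYb := bnd _ hmY Y hYc
    rw [← hmap]
    rw [ae_map_iff hTm.aemeasurable]
    · filter_upwards [hXb, hYb] with ω a b using ⟨a, b⟩
    · exact (measurableSet_Icc.preimage measurable_fst).inter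
        (measurableSet_Icc.preimage measurable_snd)
lemma memR_smul (c : ENNReal) {μ ν : Measure (ℝ × ℝ)} (h : MemR μ ν) :
    MemR (c • μ) (c • ν) := by
  intro A hA
  obtain ⟨h1, h2⟩ := h A hA
  constructor <;>
    simp only [Measure.map_smul, Measure.restrict_smul, integral_smul_measure, h1, h2]

lemma integrableOn_aux {ρ : Measure ℝ} [IsFiniteMeasure ρ] (hρ : ∀ᵐ x ∂ρ, x ∈ Icc (0:ℝ) 1)
    {f : ℝ → ℝ} (hf : Continuous f) (hbound : ∀ x ∈ Icc (0:ℝ) 1, |f x| ≤ 1) (A : Set ℝ) :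
    IntegrableOn f A ρ := by
  refine Integrable.mono' (integrable_const 1) hf.aestronglyMeasurable.restrict ?_
  filter_upwards [ae_restrict_of_ae hρ] with x hx
  simpa using hbound x hx

lemma memR_add {μ₁ ν₁ μ₂ ν₂ : Measure (ℝ × ℝ)}
    [IsFiniteMeasure μ₁] [IsFiniteMeasure μ₂] [IsFiniteMeasure ν₁] [IsFiniteMeasure ν₂]
    (s₁ : ∀ᵐ p ∂μ₁, p.1 ∈ Icc (0:ℝ) 1 ∧ p.2 ∈ Icc (0:ℝ) 1)
    (s₂ : ∀ᵐ p ∂μ₂, p.1 ∈ Icc (0:ℝ) 1 ∧ p.2 ∈ Icc (0:ℝ) 1)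
    (t₁ : ∀ᵐ p ∂ν₁, p.1 ∈ Icc (0:ℝ) 1 ∧ p.2 ∈ Icc (0:ℝ) 1)
    (t₂ : ∀ᵐ p ∂ν₂, p.1 ∈ Icc (0:ℝ) 1 ∧ p.2 ∈ Icc (0:ℝ) 1)
    (h₁ : MemR μ₁ ν₁) (h₂ : MemR μ₂ ν₂) : MemR (μ₁ + μ₂) (ν₁ + ν₂) := by
  intro A hA
  obtain ⟨h11, h12⟩ := h₁ A hA
  obtain ⟨h21, h22⟩ := h₂ A hA
  have I : ∀ (ρ : Measure (ℝ × ℝ)), IsFiniteMeasure ρ →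
      (∀ᵐ p ∂ρ, p.1 ∈ Icc (0:ℝ) 1 ∧ p.2 ∈ Icc (0:ℝ) 1) →
      ∀ f : ℝ → ℝ, Continuous f → (∀ x ∈ Icc (0:ℝ) 1, |f x| ≤ 1) →
      IntegrableOn f A (ρ.map Prod.fst) ∧ IntegrableOn f A (ρ.map Prod.snd) := by
    intro ρ hfin hsupp f hf hb
    haveI := hfin
    haveI : IsFiniteMeasure (ρ.map Prod.fst) := Measure.isFiniteMeasure_map ρ _
    haveI : IsFiniteMeasure (ρ.map Prod.snd) := Measure.isFiniteMeasure_map ρ _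
    have m1 : ∀ᵐ x ∂(ρ.map Prod.fst), x ∈ Icc (0:ℝ) 1 :=
      (ae_map_iff measurable_fst.aemeasurable measurableSet_Icc).2 (hsupp.mono fun p hp => hp.1)
    have m2 : ∀ᵐ x ∂(ρ.map Prod.snd), x ∈ Icc (0:ℝ) 1 :=
      (ae_map_iff measurable_snd.aemeasurable measurableSet_Icc).2 (hsupp.mono fun p hp => hp.2)
    exact ⟨integrableOn_aux m1 hf hb A, integrableOn_aux m2 hf hb A⟩
  have hone : ∀ x ∈ Icc (0:ℝ) 1, |1 - x| ≤ 1 := fun x hx => by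
    rw [abs_of_nonneg (by linarith [hx.2])]; linarith [hx.1]
  have hid : ∀ x ∈ Icc (0:ℝ) 1, |x| ≤ 1 := fun x hx => by
    rw [abs_of_nonneg hx.1]; exact hx.2
  constructor
  · rw [Measure.map_add _ _ measurable_fst, Measure.map_add _ _ measurable_fst,
        Measure.restrict_add, Measure.restrict_add,
        integral_add_measure (I μ₁ ‹_› s₁ (fun x => 1 - x) (continuous_const.sub continuous_id) hone).1
          (I μ₂ ‹_› s₂ (fun x => 1 - x) (continuous_const.sub continuous_id) hone).1,
        integral_add_measure (I ν₁ ‹_› t₁ (fun x => x) continuous_id hid).1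
          (I ν₂ ‹_› t₂ (fun x => x) continuous_id hid).1, h11, h21]
  · rw [Measure.map_add _ _ measurable_snd, Measure.map_add _ _ measurable_snd,
        Measure.restrict_add, Measure.restrict_add,
        integral_add_measure (I μ₁ ‹_› s₁ (fun x => 1 - x) (continuous_const.sub continuous_id) hone).2
          (I μ₂ ‹_› s₂ (fun x => 1 - x) (continuous_const.sub continuous_id) hone).2,
        integral_add_measure (I ν₁ ‹_› t₁ (fun x => x) continuous_id hid).2
          (I ν₂ ‹_› t₂ (fun x => x) continuous_id hid).2, h12, h22]

lemma fin_smul (c : NNReal) (ρ : Measure (ℝ × ℝ)) [IsFiniteMeasure ρ] :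
    IsFiniteMeasure ((c : ENNReal) • ρ) := by
  constructor
  rw [Measure.smul_apply, smul_eq_mul]
  exact ENNReal.mul_lt_top (by simp) (measure_lt_top ρ _)

theorem stmt12 (m μ ν : Measure (ℝ × ℝ)) [IsProbabilityMeasure m]
    (hcoh : IsCoherent m)
    (hrep : m = μ + ν) (hR : MemR μ ν)
    (huniq : ∀ μ' ν' : Measure (ℝ × ℝ), MemR μ' ν' → m = μ' + ν' → μ' = μ ∧ ν' = ν)
    (hmin : ∀ μ' ν' : Measure (ℝ × ℝ), MemR μ' ν' → μ' ≤ μ → ν' ≤ ν →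
      ∃ c : NNReal, c ≤ 1 ∧ μ' = (c : ENNReal) • μ ∧ ν' = (c : ENNReal) • ν) :
    ∀ (β : NNReal), 0 < β → β < 1 →
      ∀ m₁ m₂ : Measure (ℝ × ℝ), IsProbabilityMeasure m₁ → IsProbabilityMeasure m₂ →
        IsCoherent m₁ → IsCoherent m₂ →
        m = (β : ENNReal) • m₁ + ((1 - β : NNReal) : ENNReal) • m₂ →
        m₁ = m ∧ m₂ = m := by
  intro β hβ0 hβ1 m₁ m₂ hp1 hp2 hc1 hc2 hmix
  haveI := hp1; haveI := hp2
  obtain ⟨μ₁, ν₁, hR1, hsum1, hsupp1⟩ := exists_rep m₁ hc1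
  obtain ⟨μ₂, ν₂, hR2, hsum2, hsupp2⟩ := exists_rep m₂ hc2
  set γ : NNReal := 1 - β with hγ
  have hγ0 : 0 < γ := tsub_pos_of_lt hβ1
  haveI : IsFiniteMeasure μ₁ := isFiniteMeasure_of_le m₁ (hsum1 ▸ Measure.le_add_right le_rfl)
  haveI : IsFiniteMeasure ν₁ := isFiniteMeasure_of_le m₁ (hsum1 ▸ Measure.le_add_left le_rfl)
  haveI : IsFiniteMeasure μ₂ := isFiniteMeasure_of_le m₂ (hsum2 ▸ Measure.le_add_right le_rfl)
  haveI : IsFiniteMeasure ν₂ := isFiniteMeasure_of_le m₂ (hsum2 ▸ Measure.le_add_left le_rfl)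
  have sμ₁ : ∀ᵐ p ∂μ₁, p.1 ∈ Icc (0:ℝ) 1 ∧ p.2 ∈ Icc (0:ℝ) 1 :=
    hsupp1.filter_mono ((Measure.absolutelyContinuous_of_le
      (hsum1 ▸ Measure.le_add_right le_rfl)).ae_le)
  have sν₁ : ∀ᵐ p ∂ν₁, p.1 ∈ Icc (0:ℝ) 1 ∧ p.2 ∈ Icc (0:ℝ) 1 :=
    hsupp1.filter_mono ((Measure.absolutelyContinuous_of_le
      (hsum1 ▸ Measure.le_add_left le_rfl)).ae_le)
  have sμ₂ : ∀ᵐ p ∂μ₂, p.1 ∈ Icc (0:ℝ) 1 ∧ p.2 ∈ Icc (0:ℝ) 1 :=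
    hsupp2.filter_mono ((Measure.absolutelyContinuous_of_le
      (hsum2 ▸ Measure.le_add_right le_rfl)).ae_le)
  have sν₂ : ∀ᵐ p ∂ν₂, p.1 ∈ Icc (0:ℝ) 1 ∧ p.2 ∈ Icc (0:ℝ) 1 :=
    hsupp2.filter_mono ((Measure.absolutelyContinuous_of_le
      (hsum2 ▸ Measure.le_add_left le_rfl)).ae_le)
  haveI := fin_smul β μ₁; haveI := fin_smul β ν₁
  haveI := fin_smul γ μ₂; haveI := fin_smul γ ν₂
  have hRmix : MemR ((β:ENNReal) • μ₁ + (γ:ENNReal) • μ₂)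
      ((β:ENNReal) • ν₁ + (γ:ENNReal) • ν₂) :=
    memR_add (Measure.ae_smul_measure sμ₁ _) (Measure.ae_smul_measure sμ₂ _)
      (Measure.ae_smul_measure sν₁ _) (Measure.ae_smul_measure sν₂ _)
      (memR_smul _ hR1) (memR_smul _ hR2)
  have hsummix : m = ((β:ENNReal) • μ₁ + (γ:ENNReal) • μ₂)
      + ((β:ENNReal) • ν₁ + (γ:ENNReal) • ν₂) := by
    rw [hmix, ← hsum1, ← hsum2, smul_add, smul_add]
    abel
  obtain ⟨hμeq, hνeq⟩ := huniq _ _ hRmix hsummix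
  have cancel : ∀ (b : NNReal), 0 < b → ∀ ρ σ : Measure (ℝ × ℝ),
      (b:ENNReal) • ρ = (b:ENNReal) • σ → ρ = σ := by
    intro b hb ρ σ h
    ext s hs
    have h2 := congrArg (fun τ : Measure (ℝ × ℝ) => τ s) h
    simp only [Measure.smul_apply, smul_eq_mul] at h2
    exact (ENNReal.mul_right_inj (by exact_mod_cast hb.ne') ENNReal.coe_ne_top).1 h2
  have study : ∀ (b : NNReal), 0 < b →
      ∀ (μ' ν' : Measure (ℝ × ℝ)), IsProbabilityMeasure (μ' + ν') → MemR μ' ν' →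
      (b:ENNReal) • μ' ≤ μ → (b:ENNReal) • ν' ≤ ν → μ' + ν' = m := by
    intro b hb μ' ν' hprob hR' hle1 hle2
    obtain ⟨c, _, hcμ, hcν⟩ := hmin _ _ (memR_smul _ hR') hle1 hle2
    have e : (b:ENNReal) • (μ' + ν') = (c:ENNReal) • m := by
      rw [hrep, smul_add, smul_add, hcμ, hcν]
    have hbc : (b:ENNReal) = (c:ENNReal) := by
      have h2 := congrArg (fun τ : Measure (ℝ × ℝ) => τ univ) e
      simp only [Measure.smul_apply, smul_eq_mul, measure_univ, mul_one,
        Measure.add_apply] at h2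
      exact h2
    have hbc' : b = c := by exact_mod_cast hbc
    rw [hbc] at e
    exact cancel c (hbc' ▸ hb) _ _ e
  constructor
  · rw [← hsum1]
    exact study β hβ0 μ₁ ν₁ (hsum1 ▸ hp1) hR1
      (hμeq ▸ Measure.le_add_right le_rfl) (hνeq ▸ Measure.le_add_right le_rfl)
  · rw [← hsum2]
    exact study γ hγ0 μ₂ ν₂ (hsum2 ▸ hp2) hR2
      (hμeq ▸ Measure.le_add_left le_rfl) (hνeq ▸ Measure.le_add_left le_rfl)
end

section
/- Let m be an extreme point of the set C of coherent distributions. Then the representation of m is unique: if (μ₁,ν₁) and (μ₂,ν₂) both belong to R(m), then μ₁ = μ₂ and ν₁ = ν₂. -/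
open MeasureTheory Set

/-- Uniqueness characterization of the conditional expectation, specialized. -/
lemma condexp_helper {Ω : Type} [mΩ : MeasurableSpace Ω] (P : Measure Ω) [IsFiniteMeasure P]
    {W Z : Ω → ℝ} (hW : Measurable W) (hWi : Integrable W P) (hZi : Integrable Z P)
    (heq : ∀ A : Set ℝ, MeasurableSet A →
      ∫ ω in W ⁻¹' A, W ω ∂P = ∫ ω in W ⁻¹' A, Z ω ∂P) :
    W =ᵐ[P] P[Z | MeasurableSpace.comap W (borel ℝ)] := by
  have hm : MeasurableSpace.comap W (borel ℝ) ≤ mΩ := hW.comap_le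
  refine ae_eq_condExp_of_forall_setIntegral_eq hm hZi (fun s _ _ => hWi.integrableOn)
    (fun s hs _ => ?_) ?_
  · obtain ⟨A, hA, rfl⟩ := hs
    exact heq A hA
  · exact StronglyMeasurable.aestronglyMeasurable
      (Measurable.stronglyMeasurable (measurable_iff_comap_le.mpr le_rfl))

/-- From the defining integral identity of `R`, the first measure is determined on every set. -/
lemma marginal_formula (ρ σ : Measure ℝ) [IsFiniteMeasure ρ] [IsFiniteMeasure σ]
    (hsum_ae : ∀ᵐ x ∂(ρ + σ), x ∈ Set.Icc (0:ℝ) 1)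
    (h : ∀ A : Set ℝ, MeasurableSet A → ∫ x in A, (1 - x) ∂ρ = ∫ x in A, x ∂σ)
    (A : Set ℝ) (hA : MeasurableSet A) :
    (ρ A).toReal = ∫ x in A, x ∂(ρ + σ) := by
  have hxi : Integrable (fun x : ℝ => x) (ρ + σ) :=
    (integrable_const (1:ℝ)).mono' measurable_id.aestronglyMeasurable
      (hsum_ae.mono fun x hx => by
        rw [Real.norm_eq_abs, abs_le]; exact ⟨by linarith [hx.1], hx.2⟩)
  have hxρ : Integrable (fun x : ℝ => x) ρ := hxi.mono_measure (Measure.le_add_right le_rfl)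
  have hxσ : Integrable (fun x : ℝ => x) σ := hxi.mono_measure (Measure.le_add_left le_rfl)
  have h1 : ∫ x in A, (1 - x) ∂ρ = (ρ A).toReal - ∫ x in A, x ∂ρ := by
    rw [integral_sub (integrableOn_const (C := (1:ℝ)) (measure_ne_top ρ A)) hxρ.integrableOn]
    simp [measureReal_def]
  have h2 : ∫ x in A, x ∂(ρ + σ) = ∫ x in A, x ∂ρ + ∫ x in A, x ∂σ := by
    rw [Measure.restrict_add, integral_add_measure hxρ.integrableOn hxσ.integrableOn]
  have h3 := h A hA
  rw [h1] at h3
  rw [h2, ← h3]; ring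

/-- Any decomposition `m = μ + ν` satisfying the marginal identities of `R` yields a coherent
measure, via the canonical construction on `(ℝ × ℝ) × Bool` with `Z` the indicator of the
`μ`-component. -/
lemma isCoherent_construct (μ ν : Measure (ℝ × ℝ)) [IsFiniteMeasure μ] [IsFiniteMeasure ν]
    (hprob : IsProbabilityMeasure (μ + ν))
    (hx : ∀ A : Set ℝ, MeasurableSet A →
      ((μ.map Prod.fst) A).toReal = ∫ x in A, x ∂((μ + ν).map Prod.fst))
    (hy : ∀ B : Set ℝ, MeasurableSet B →
      ((μ.map Prod.snd) B).toReal = ∫ y in B, y ∂((μ + ν).map Prod.snd))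
    (hae : ∀ᵐ p ∂(μ + ν), p ∈ (Prod.fst ⁻¹' Set.Icc (0:ℝ) 1 ∩ Prod.snd ⁻¹' Set.Icc (0:ℝ) 1)) :
    IsCoherent (μ + ν) := by
  classical
  set Ω := (ℝ × ℝ) × Bool with hΩ
  let ι : (ℝ × ℝ) → Ω := fun p => (p, true)
  let κ : (ℝ × ℝ) → Ω := fun p => (p, false)
  have hι : Measurable ι := measurable_id.prodMk measurable_const
  have hκ : Measurable κ := measurable_id.prodMk measurable_const
  set P : Measure Ω := μ.map ι + ν.map κ with hP
  let X : Ω → ℝ := fun ω => ω.1.1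
  let Y : Ω → ℝ := fun ω => ω.1.2
  let Z : Ω → ℝ := fun ω => if ω.2 then 1 else 0
  have hX : Measurable X := measurable_fst.fst
  have hY : Measurable Y := measurable_fst.snd
  have hZ : Measurable Z :=
    (measurable_from_top (f := fun b : Bool => if b then (1:ℝ) else 0)).comp measurable_snd
  have hZicc : ∀ ω, Z ω ∈ Set.Icc (0:ℝ) 1 := by
    intro ω; by_cases h : ω.2 <;> simp [Z, h]
  have hmapfst : P.map Prod.fst = μ + ν := by
    rw [hP, Measure.map_add _ _ measurable_fst, Measure.map_map measurable_fst hι,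
      Measure.map_map measurable_fst hκ]
    have h1 : (Prod.fst ∘ ι) = id := rfl
    have h2 : (Prod.fst ∘ κ) = id := rfl
    rw [h1, h2, Measure.map_id, Measure.map_id]
  have hPprob : IsProbabilityMeasure P := by
    constructor
    rw [hP, Measure.add_apply, Measure.map_apply hι MeasurableSet.univ,
      Measure.map_apply hκ MeasurableSet.univ, Set.preimage_univ, Set.preimage_univ,
      ← Measure.add_apply]
    exact hprob.measure_univ
  have haeP : ∀ᵐ ω ∂P, X ω ∈ Set.Icc (0:ℝ) 1 ∧ Y ω ∈ Set.Icc (0:ℝ) 1 := by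
    have hmeas : MeasurableSet (Prod.fst ⁻¹' Set.Icc (0:ℝ) 1 ∩ Prod.snd ⁻¹' Set.Icc (0:ℝ) 1) :=
      (measurable_fst measurableSet_Icc).inter (measurable_snd measurableSet_Icc)
    have : ∀ᵐ p ∂(P.map Prod.fst),
        p ∈ (Prod.fst ⁻¹' Set.Icc (0:ℝ) 1 ∩ Prod.snd ⁻¹' Set.Icc (0:ℝ) 1) := by
      rw [hmapfst]; exact hae
    have h2 := (ae_map_iff measurable_fst.aemeasurable hmeas).mp this
    exact h2.mono fun ω hω => ⟨hω.1, hω.2⟩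
  have hXi : Integrable X P :=
    (integrable_const (1:ℝ)).mono' hX.aestronglyMeasurable
      (haeP.mono fun ω hω => by
        rw [Real.norm_eq_abs, abs_le]; exact ⟨by linarith [hω.1.1], hω.1.2⟩)
  have hYi : Integrable Y P :=
    (integrable_const (1:ℝ)).mono' hY.aestronglyMeasurable
      (haeP.mono fun ω hω => by
        rw [Real.norm_eq_abs, abs_le]; exact ⟨by linarith [hω.2.1], hω.2.2⟩)
  have hZi : Integrable Z P :=
    (integrable_const (1:ℝ)).mono' hZ.aestronglyMeasurable
      (Filter.Eventually.of_forall fun ω => by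
        rw [Real.norm_eq_abs, abs_le]; exact ⟨by linarith [(hZicc ω).1], (hZicc ω).2⟩)
  have hZsetμ : ∀ (s : Set Ω), MeasurableSet s →
      ∫ ω in s, Z ω ∂P = (μ (ι ⁻¹' s)).toReal := by
    intro s hs
    rw [hP, Measure.restrict_add, integral_add_measure
      (hZi.mono_measure (Measure.le_add_right le_rfl)).integrableOn
      (hZi.mono_measure (Measure.le_add_left le_rfl)).integrableOn]
    rw [setIntegral_map hs hZ.aestronglyMeasurable hι.aemeasurable,
      setIntegral_map hs hZ.aestronglyMeasurable hκ.aemeasurable]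
    have e1 : ∀ p : ℝ × ℝ, Z (ι p) = 1 := fun p => rfl
    have e2 : ∀ p : ℝ × ℝ, Z (κ p) = 0 := fun p => rfl
    simp only [e1, e2, integral_const, integral_zero, smul_eq_mul, mul_one, mul_zero, add_zero,
      Measure.restrict_apply_univ]
    rw [measureReal_restrict_apply_univ, measureReal_def]
  have hXset : ∀ A : Set ℝ, MeasurableSet A →
      ∫ ω in X ⁻¹' A, X ω ∂P = ∫ x in A, x ∂((μ + ν).map Prod.fst) := by
    intro A hA
    have hmapX : P.map X = (μ + ν).map Prod.fst := by
      have : (X : Ω → ℝ) = Prod.fst ∘ (Prod.fst : Ω → ℝ × ℝ) := rfl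
      rw [this, ← Measure.map_map measurable_fst measurable_fst, hmapfst]
    rw [← hmapX,
      setIntegral_map (f := fun x : ℝ => x) hA measurable_id.aestronglyMeasurable hX.aemeasurable]
  have hYset : ∀ A : Set ℝ, MeasurableSet A →
      ∫ ω in Y ⁻¹' A, Y ω ∂P = ∫ y in A, y ∂((μ + ν).map Prod.snd) := by
    intro A hA
    have hmapY : P.map Y = (μ + ν).map Prod.snd := by
      have h0 : (Y : Ω → ℝ) = Prod.snd ∘ (Prod.fst : Ω → ℝ × ℝ) := rfl
      rw [h0, ← Measure.map_map measurable_snd measurable_fst, hmapfst]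
    rw [← hmapY,
      setIntegral_map (f := fun y : ℝ => y) hA measurable_id.aestronglyMeasurable hY.aemeasurable]
  have hcondX : X =ᵐ[P] P[Z | MeasurableSpace.comap X (borel ℝ)] := by
    refine condexp_helper P hX hXi hZi fun A hA => ?_
    rw [hXset A hA, hZsetμ (X ⁻¹' A) (hX hA)]
    have : ι ⁻¹' (X ⁻¹' A) = Prod.fst ⁻¹' A := rfl
    rw [this, ← Measure.map_apply measurable_fst hA, ← hx A hA]
  have hcondY : Y =ᵐ[P] P[Z | MeasurableSpace.comap Y (borel ℝ)] := by
    refine condexp_helper P hY hYi hZi fun A hA => ?_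
    rw [hYset A hA, hZsetμ (Y ⁻¹' A) (hY hA)]
    have : ι ⁻¹' (Y ⁻¹' A) = Prod.snd ⁻¹' A := rfl
    rw [this, ← Measure.map_apply measurable_snd hA, ← hy A hA]
  refine ⟨Ω, inferInstance, P, hPprob, X, Y, Z, hX, hY, hZ, hZicc, ?_, hcondX, hcondY⟩
  have : (fun ω : Ω => (X ω, Y ω)) = Prod.fst := rfl
  rw [this, hmapfst]

/-- A coherent probability measure is concentrated on `[0,1]²`. -/
lemma coherent_ae_Icc (m : Measure (ℝ × ℝ)) [IsProbabilityMeasure m] (hcoh : IsCoherent m) :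
    ∀ᵐ p ∂m, p ∈ (Prod.fst ⁻¹' Set.Icc (0:ℝ) 1 ∩ Prod.snd ⁻¹' Set.Icc (0:ℝ) 1) := by
  obtain ⟨Ω, mΩ, P, hP, X, Y, Z, hX, hY, hZ, hZicc, hmap, hcX, hcY⟩ := hcoh
  have hZi : Integrable Z P :=
    (integrable_const (1:ℝ)).mono' hZ.aestronglyMeasurable
      (Filter.Eventually.of_forall fun ω => by
        rw [Real.norm_eq_abs, abs_le]; exact ⟨by linarith [(hZicc ω).1], (hZicc ω).2⟩)
  have key : ∀ (W : Ω → ℝ), Measurable W →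
      W =ᵐ[P] P[Z | MeasurableSpace.comap W (borel ℝ)] →
      ∀ᵐ ω ∂P, W ω ∈ Set.Icc (0:ℝ) 1 := by
    intro W hW hc
    have hm : MeasurableSpace.comap W (borel ℝ) ≤ mΩ := hW.comap_le
    have h0 : (0 : Ω → ℝ) ≤ᵐ[P] P[Z | MeasurableSpace.comap W (borel ℝ)] :=
      condExp_nonneg (Filter.Eventually.of_forall fun ω => (hZicc ω).1)
    have h1 : P[Z | MeasurableSpace.comap W (borel ℝ)]
        ≤ᵐ[P] P[(fun _ => (1:ℝ)) | MeasurableSpace.comap W (borel ℝ)] :=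
      condExp_mono hZi (integrable_const 1) (Filter.Eventually.of_forall fun ω => (hZicc ω).2)
    rw [condExp_const hm] at h1
    filter_upwards [h0, h1, hc] with ω h0' h1' hc'
    rw [hc']
    exact ⟨h0', h1'⟩
  have hXae := key X hX hcX
  have hYae := key Y hY hcY
  rw [← hmap]
  refine (ae_map_iff (hX.prodMk hY).aemeasurable
    ((measurable_fst measurableSet_Icc).inter (measurable_snd measurableSet_Icc))).mpr ?_
  filter_upwards [hXae, hYae] with ω h1 h2
  exact ⟨h1, h2⟩

lemma measure_eq_of_toReal {ρ₁ ρ₂ : Measure ℝ} [IsFiniteMeasure ρ₁] [IsFiniteMeasure ρ₂]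
    (h : ∀ A : Set ℝ, MeasurableSet A → (ρ₁ A).toReal = (ρ₂ A).toReal) : ρ₁ = ρ₂ := by
  ext A hA
  exact (ENNReal.toReal_eq_toReal_iff' (measure_ne_top ρ₁ A) (measure_ne_top ρ₂ A)).mp (h A hA)

theorem stmt13 (m : Measure (ℝ × ℝ)) [IsProbabilityMeasure m]
    (hcoh : IsCoherent m)
    (hext : ∀ (β : NNReal), 0 < β → β < 1 →
      ∀ m₁ m₂ : Measure (ℝ × ℝ), IsProbabilityMeasure m₁ → IsProbabilityMeasure m₂ →
        IsCoherent m₁ → IsCoherent m₂ →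
        m = (β : ENNReal) • m₁ + ((1 - β : NNReal) : ENNReal) • m₂ →
        m₁ = m ∧ m₂ = m) :
    ∀ μ₁ ν₁ μ₂ ν₂ : Measure (ℝ × ℝ),
      MemR μ₁ ν₁ → m = μ₁ + ν₁ → MemR μ₂ ν₂ → m = μ₂ + ν₂ →
      μ₁ = μ₂ ∧ ν₁ = ν₂ := by
  intro μ₁ ν₁ μ₂ ν₂ hR1 hm1 hR2 hR2'
  -- finiteness of the components
  have hfin : ∀ {μ ν : Measure (ℝ × ℝ)}, m = μ + ν →
      IsFiniteMeasure μ ∧ IsFiniteMeasure ν := by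
    intro μ ν h
    constructor <;> constructor
    · calc μ univ ≤ μ univ + ν univ := le_self_add
        _ = (μ + ν) univ := (Measure.add_apply _ _ _).symm
        _ = m univ := by rw [h]
        _ < ⊤ := measure_lt_top m univ
    · calc ν univ ≤ μ univ + ν univ := le_add_self
        _ = (μ + ν) univ := (Measure.add_apply _ _ _).symm
        _ = m univ := by rw [h]
        _ < ⊤ := measure_lt_top m univ
  obtain ⟨hfμ₁, hfν₁⟩ := hfin hm1
  obtain ⟨hfμ₂, hfν₂⟩ := hfin hR2'
  haveI := hfμ₁; haveI := hfν₁; haveI := hfμ₂; haveI := hfν₂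
  haveI : IsFiniteMeasure (μ₁.map Prod.fst) := Measure.isFiniteMeasure_map _ _
  haveI : IsFiniteMeasure (μ₂.map Prod.fst) := Measure.isFiniteMeasure_map _ _
  haveI : IsFiniteMeasure (μ₁.map Prod.snd) := Measure.isFiniteMeasure_map _ _
  haveI : IsFiniteMeasure (μ₂.map Prod.snd) := Measure.isFiniteMeasure_map _ _
  haveI : IsFiniteMeasure (ν₁.map Prod.fst) := Measure.isFiniteMeasure_map _ _
  haveI : IsFiniteMeasure (ν₂.map Prod.fst) := Measure.isFiniteMeasure_map _ _
  haveI : IsFiniteMeasure (ν₁.map Prod.snd) := Measure.isFiniteMeasure_map _ _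
  haveI : IsFiniteMeasure (ν₂.map Prod.snd) := Measure.isFiniteMeasure_map _ _
  -- a.e. concentration on [0,1]²
  have haem := coherent_ae_Icc m hcoh
  have haex : ∀ᵐ x ∂(m.map Prod.fst), x ∈ Set.Icc (0:ℝ) 1 :=
    (ae_map_iff measurable_fst.aemeasurable measurableSet_Icc).mpr
      (haem.mono fun p hp => hp.1)
  have haey : ∀ᵐ y ∂(m.map Prod.snd), y ∈ Set.Icc (0:ℝ) 1 :=
    (ae_map_iff measurable_snd.aemeasurable measurableSet_Icc).mpr
      (haem.mono fun p hp => hp.2)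
  -- marginal formulas
  have hmarg : ∀ (μ ν : Measure (ℝ × ℝ)) [IsFiniteMeasure μ] [IsFiniteMeasure ν],
      MemR μ ν → m = μ + ν →
      (∀ A : Set ℝ, MeasurableSet A →
        ((μ.map Prod.fst) A).toReal = ∫ x in A, x ∂(m.map Prod.fst)) ∧
      (∀ B : Set ℝ, MeasurableSet B →
        ((μ.map Prod.snd) B).toReal = ∫ y in B, y ∂(m.map Prod.snd)) := by
    intro μ ν _ _ hR hm'
    have hfst : m.map Prod.fst = μ.map Prod.fst + ν.map Prod.fst := by
      rw [hm', Measure.map_add _ _ measurable_fst]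
    have hsnd : m.map Prod.snd = μ.map Prod.snd + ν.map Prod.snd := by
      rw [hm', Measure.map_add _ _ measurable_snd]
    constructor
    · intro A hA
      have := marginal_formula (μ.map Prod.fst) (ν.map Prod.fst)
        (by rw [← hfst]; exact haex) (fun A hA => (hR A hA).1) A hA
      rwa [← hfst] at this
    · intro B hB
      have := marginal_formula (μ.map Prod.snd) (ν.map Prod.snd)
        (by rw [← hsnd]; exact haey) (fun B hB => (hR B hB).2) B hB
      rwa [← hsnd] at this
  obtain ⟨h1x, h1y⟩ := hmarg μ₁ ν₁ hR1 hm1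
  obtain ⟨h2x, h2y⟩ := hmarg μ₂ ν₂ hR2 hR2'
  -- equal marginals of μ₁ and μ₂
  have hμx : μ₂.map Prod.fst = μ₁.map Prod.fst :=
    measure_eq_of_toReal (fun A hA => by rw [h2x A hA, h1x A hA])
  have hμy : μ₂.map Prod.snd = μ₁.map Prod.snd :=
    measure_eq_of_toReal (fun B hB => by rw [h2y B hB, h1y B hB])
  -- marginals of the mixed measures agree with those of m
  have hfst1 : (μ₂ + ν₁).map Prod.fst = m.map Prod.fst := by
    rw [Measure.map_add _ _ measurable_fst, hμx, hm1, Measure.map_add _ _ measurable_fst]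
  have hsnd1 : (μ₂ + ν₁).map Prod.snd = m.map Prod.snd := by
    rw [Measure.map_add _ _ measurable_snd, hμy, hm1, Measure.map_add _ _ measurable_snd]
  have hfst2 : (μ₁ + ν₂).map Prod.fst = m.map Prod.fst := by
    rw [Measure.map_add _ _ measurable_fst, ← hμx, hR2', Measure.map_add _ _ measurable_fst]
  have hsnd2 : (μ₁ + ν₂).map Prod.snd = m.map Prod.snd := by
    rw [Measure.map_add _ _ measurable_snd, ← hμy, hR2', Measure.map_add _ _ measurable_snd]
  -- total masses
  have hμuniv : μ₂ univ = μ₁ univ := by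
    have h := congrArg (fun q : Measure ℝ => q univ) hμx
    simpa [Measure.map_apply measurable_fst MeasurableSet.univ] using h
  have hprob1 : IsProbabilityMeasure (μ₂ + ν₁) := by
    constructor
    rw [Measure.add_apply, hμuniv, ← Measure.add_apply, ← hm1]
    exact measure_univ
  have hprob2 : IsProbabilityMeasure (μ₁ + ν₂) := by
    constructor
    rw [Measure.add_apply, ← hμuniv, ← Measure.add_apply, ← hR2']
    exact measure_univ
  -- a.e. concentration for the mixed measures
  have hle : ∀ {μ ν : Measure (ℝ × ℝ)}, m = μ + ν → μ ≤ m ∧ ν ≤ m := by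
    intro μ ν h
    constructor
    · rw [h]; exact Measure.le_add_right le_rfl
    · rw [h]; exact Measure.le_add_left le_rfl
  have hae1 : ∀ᵐ p ∂(μ₂ + ν₁),
      p ∈ (Prod.fst ⁻¹' Set.Icc (0:ℝ) 1 ∩ Prod.snd ⁻¹' Set.Icc (0:ℝ) 1) := by
    rw [ae_add_measure_iff]
    exact ⟨MeasureTheory.ae_mono (hle hR2').1 haem, MeasureTheory.ae_mono (hle hm1).2 haem⟩
  have hae2 : ∀ᵐ p ∂(μ₁ + ν₂),
      p ∈ (Prod.fst ⁻¹' Set.Icc (0:ℝ) 1 ∩ Prod.snd ⁻¹' Set.Icc (0:ℝ) 1) := by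
    rw [ae_add_measure_iff]
    exact ⟨MeasureTheory.ae_mono (hle hm1).1 haem, MeasureTheory.ae_mono (hle hR2').2 haem⟩
  -- coherence of the mixed measures
  have hcoh1 : IsCoherent (μ₂ + ν₁) :=
    isCoherent_construct μ₂ ν₁ hprob1
      (fun A hA => by rw [hfst1]; exact h2x A hA)
      (fun B hB => by rw [hsnd1]; exact h2y B hB) hae1
  have hcoh2 : IsCoherent (μ₁ + ν₂) :=
    isCoherent_construct μ₁ ν₂ hprob2
      (fun A hA => by rw [hfst2]; exact h1x A hA)
      (fun B hB => by rw [hsnd2]; exact h1y B hB) hae2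
  -- extremality
  have hdec : m = ((1/2 : NNReal) : ENNReal) • (μ₂ + ν₁)
      + (((1 : NNReal) - 1/2 : NNReal) : ENNReal) • (μ₁ + ν₂) := by
    ext s hs
    have e1 : m s = μ₁ s + ν₁ s := by rw [hm1, Measure.add_apply]
    have e2 : m s = μ₂ s + ν₂ s := by rw [hR2', Measure.add_apply]
    have h12 : ((1/2 : NNReal) : ENNReal) = 2⁻¹ := by norm_num
    have h12' : (((1 : NNReal) - 1/2 : NNReal) : ENNReal) = 2⁻¹ := by norm_num
    rw [Measure.add_apply, Measure.smul_apply, Measure.smul_apply, smul_eq_mul, smul_eq_mul,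
      h12, h12', Measure.add_apply, Measure.add_apply, ← mul_add]
    have hsum : μ₂ s + ν₁ s + (μ₁ s + ν₂ s) = m s + m s := by
      nth_rewrite 1 [e2]; rw [e1]; ring
    rw [hsum, ← two_mul, ← mul_assoc,
      ENNReal.inv_mul_cancel (by norm_num) (by norm_num), one_mul]
  obtain ⟨he1, he2⟩ := hext (1/2) one_half_pos one_half_lt_one (μ₂ + ν₁) (μ₁ + ν₂)
    hprob1 hprob2 hcoh1 hcoh2 hdec
  have hμeq : μ₂ = μ₁ := by
    have h := he1.trans hm1
    ext s hs
    have hss := Measure.ext_iff.mp h s hs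
    rw [Measure.add_apply, Measure.add_apply] at hss
    exact WithTop.add_right_cancel (measure_ne_top ν₁ s) hss
  have hνeq : ν₂ = ν₁ := by
    have h := he2.trans hm1
    ext s hs
    have hss := Measure.ext_iff.mp h s hs
    rw [Measure.add_apply, Measure.add_apply] at hss
    exact WithTop.add_left_cancel (measure_ne_top μ₁ s) hss
  exact ⟨hμeq.symm, hνeq.symm⟩
end

section
/- Let η be a finitely supported extreme point of the set C of coherent distributions, with unique representation (μ,ν). Then supp(η) contains no alternating cycle: there is no axial cycle (x₁,y₁),…,(x_{2n},y_{2n}) in supp(η) with all odd-indexed points in supp(μ) and all even-indexed points in supp(ν). -/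
open MeasureTheory Set
open scoped ENNReal

lemma msum_restrict {α : Type*} [MeasurableSpace α] (s : Finset ℕ) (m : ℕ → Measure α)
    (A : Set α) : (∑ j ∈ s, m j).restrict A = ∑ j ∈ s, (m j).restrict A := by
  ext t ht
  simp [Measure.restrict_apply ht, Measure.finset_sum_apply]

lemma msum_map {α β : Type*} [MeasurableSpace α] [MeasurableSpace β] (s : Finset ℕ)
    (m : ℕ → Measure α) {c : α → β} (hc : Measurable c) :
    (∑ j ∈ s, m j).map c = ∑ j ∈ s, (m j).map c := by
  ext t ht
  rw [Measure.map_apply hc ht, Measure.finset_sum_apply, Measure.finset_sum_apply]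
  exact Finset.sum_congr rfl fun j _ => (Measure.map_apply hc ht).symm

lemma integrable_of_fs (m : Measure ℝ) [IsFiniteMeasure m] (B : Finset ℝ)
    (hB : m ((↑B : Set ℝ))ᶜ = 0) (f : ℝ → ℝ) : Integrable f m := by
  have h1 : m.restrict ↑B = m := by
    apply Measure.restrict_eq_self_of_ae_mem
    rw [ae_iff]
    have : {x | ¬ x ∈ (↑B : Set ℝ)} = ((↑B : Set ℝ))ᶜ := rfl
    rw [this, hB]
  rw [← h1]
  exact IntegrableOn.of_finite B.finite_toSet

lemma integrable_dirac_f (f : ℝ → ℝ) (a : ℝ) : Integrable f (Measure.dirac a) :=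
  (integrable_const (f a)).congr (ae_eq_dirac f).symm

open Classical in
lemma dirac_sum_setIntegral (k : ℕ) (a : ℕ → ℝ) (A : Set ℝ) (f : ℝ → ℝ) :
    ∫ x in A, f x ∂(∑ j ∈ Finset.range k, Measure.dirac (a j)) =
      ∑ j ∈ Finset.range k, if a j ∈ A then f (a j) else 0 := by
  classical
  rw [msum_restrict, integral_finset_sum_measure
    (fun j _ => (integrable_dirac_f f (a j)).restrict)]
  exact Finset.sum_congr rfl fun j _ => setIntegral_dirac f (a j) A

lemma reindex_sum (n : ℕ) (F : ℕ → ℝ) (h : F n = F 0) :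
    ∑ j ∈ Finset.range n, F (j + 1) = ∑ j ∈ Finset.range n, F j := by
  have h1 := Finset.sum_range_succ' F n
  have h2 := Finset.sum_range_succ F n
  rw [h1] at h2
  linarith

open Classical in
lemma marg (ε : ℝ≥0∞) (hεfin : ε ≠ ⊤) (n : ℕ) (q : ℕ → ℝ × ℝ) (m : Measure (ℝ × ℝ))
    [IsFiniteMeasure m] (S : Finset (ℝ × ℝ)) (hm : m ((↑S : Set (ℝ × ℝ)))ᶜ = 0)
    (c : ℝ × ℝ → ℝ) (hc : Measurable c) (A : Set ℝ) (hA : MeasurableSet A) (f : ℝ → ℝ) :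
    ∫ x in A, f x ∂((m + ε • ∑ j ∈ Finset.range n, Measure.dirac (q j)).map c) =
      ∫ x in A, f x ∂(m.map c) +
        ε.toReal * ∑ j ∈ Finset.range n, (if c (q j) ∈ A then f (c (q j)) else 0) := by
  haveI : IsFiniteMeasure (m.map c) := by
    constructor
    rw [Measure.map_apply hc MeasurableSet.univ]
    exact measure_lt_top m _
  have hmap : (m + ε • ∑ j ∈ Finset.range n, Measure.dirac (q j)).map c =
      m.map c + ε • ∑ j ∈ Finset.range n, Measure.dirac (c (q j)) := by
    rw [Measure.map_add _ _ hc, Measure.map_smul, msum_map _ _ hc]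
    congr 2
    exact Finset.sum_congr rfl fun j _ => Measure.map_dirac' hc (q j)
  have hS' : (m.map c) ((↑(S.image c) : Set ℝ))ᶜ = 0 := by
    rw [Measure.map_apply hc (S.image c).measurableSet.compl]
    apply measure_mono_null _ hm
    intro x hx
    simp only [Set.mem_compl_iff, Set.mem_preimage, Finset.coe_image, Set.mem_image] at hx ⊢
    intro hxS
    exact hx ⟨x, hxS, rfl⟩
  have I1 : Integrable f ((m.map c).restrict A) :=
    (integrable_of_fs (m.map c) (S.image c) hS' f).restrict
  have I2 : Integrable f (((ε • ∑ j ∈ Finset.range n, Measure.dirac (c (q j))) : Measure ℝ).restrict A) := by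
    rw [Measure.restrict_smul, msum_restrict]
    exact (integrable_finset_sum_measure.mpr
      (fun j _ => (integrable_dirac_f f (c (q j))).restrict)).smul_measure hεfin
  rw [hmap, Measure.restrict_add, integral_add_measure I1 I2]
  congr 1
  rw [Measure.restrict_smul, integral_smul_measure, dirac_sum_setIntegral]
  simp [smul_eq_mul]

lemma key_le (ε : ℝ≥0∞) (n : ℕ) (q : ℕ → ℝ × ℝ) (m : Measure (ℝ × ℝ))
    (hq : ∀ i < n, ∀ j < n, i ≠ j → q i ≠ q j) (hle : ∀ j < n, ε ≤ m {q j}) :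
    (ε • ∑ j ∈ Finset.range n, Measure.dirac (q j) : Measure (ℝ × ℝ)) ≤ m := by
  rw [Measure.le_iff]
  intro s hs
  have h1 : (ε • ∑ j ∈ Finset.range n, Measure.dirac (q j) : Measure (ℝ × ℝ)) s
      = ∑ j ∈ Finset.range n, ε * Measure.dirac (q j) s := by
    simp [Measure.finset_sum_apply, Finset.mul_sum]
  rw [h1]
  calc ∑ j ∈ Finset.range n, ε * Measure.dirac (q j) s
      ≤ ∑ j ∈ Finset.range n, m ({q j} ∩ s) := by
        apply Finset.sum_le_sum
        intro j hj
        by_cases h : q j ∈ s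
        · rw [Measure.dirac_apply' _ hs, Set.indicator_of_mem h, Pi.one_apply, mul_one,
            Set.inter_eq_left.mpr (Set.singleton_subset_iff.mpr h)]
          exact hle j (Finset.mem_range.mp hj)
        · rw [Measure.dirac_apply' _ hs, Set.indicator_of_notMem h, mul_zero]
          exact zero_le
    _ = m (⋃ j ∈ Finset.range n, ({q j} ∩ s)) := by
        rw [measure_biUnion_finset ?_ (fun j _ => (measurableSet_singleton _).inter hs)]
        intro i hi j hj hij
        apply Set.disjoint_left.mpr
        intro x hx hx'
        exact hq i (Finset.mem_range.mp hi) j (Finset.mem_range.mp hj) hij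
          (by rw [← hx.1, ← hx'.1])
    _ ≤ m s := measure_mono (by
        apply Set.iUnion₂_subset
        intro j _
        exact Set.inter_subset_right)

theorem stmt17 (η μ ν : Measure (ℝ × ℝ)) [IsProbabilityMeasure η]
    (hcoh : IsCoherent η)
    (hext : ∀ (β : NNReal), 0 < β → β < 1 →
      ∀ m₁ m₂ : Measure (ℝ × ℝ), IsProbabilityMeasure m₁ → IsProbabilityMeasure m₂ →
        IsCoherent m₁ → IsCoherent m₂ →
        η = (β : ENNReal) • m₁ + ((1 - β : NNReal) : ENNReal) • m₂ →
        m₁ = η ∧ m₂ = η)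
    (S : Finset (ℝ × ℝ)) (hS : η (↑S)ᶜ = 0) (hSpos : ∀ p ∈ S, 0 < η {p})
    (hrep : η = μ + ν) (hR : MemR μ ν)
    (huniq : ∀ μ' ν' : Measure (ℝ × ℝ), MemR μ' ν' → η = μ' + ν' → μ' = μ ∧ ν' = ν) :
    ¬ ∃ (n : ℕ), 1 ≤ n ∧ ∃ p : ℕ → ℝ × ℝ,
        Set.InjOn p (Set.Iio (2 * n)) ∧
        p (2 * n) = p 0 ∧
        (∀ j < n, (p (2 * j)).2 = (p (2 * j + 1)).2) ∧
        (∀ j < n, (p (2 * j + 1)).1 = (p (2 * j + 2)).1) ∧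
        (∀ j < n, 0 < μ {p (2 * j)}) ∧
        (∀ j < n, 0 < ν {p (2 * j + 1)}) := by
  classical
  rintro ⟨n, hn, p, hinj, hcyc, hy, hx, hμpos, hνpos⟩
  have hμle : μ ≤ η := hrep ▸ Measure.le_add_right le_rfl
  have hνle : ν ≤ η := hrep ▸ Measure.le_add_left le_rfl
  haveI : IsFiniteMeasure μ := ⟨lt_of_le_of_lt (hμle Set.univ) (measure_lt_top η _)⟩
  haveI : IsFiniteMeasure ν := ⟨lt_of_le_of_lt (hνle Set.univ) (measure_lt_top η _)⟩
  have hμS : μ ((↑S : Set (ℝ × ℝ)))ᶜ = 0 :=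
    le_antisymm (le_trans (hμle _) hS.le) (zero_le)
  have hνS : ν ((↑S : Set (ℝ × ℝ)))ᶜ = 0 :=
    le_antisymm (le_trans (hνle _) hS.le) (zero_le)
  have hne : (Finset.range n).Nonempty := Finset.nonempty_range_iff.mpr (by omega)
  set ε : ℝ≥0∞ := (Finset.range n).inf' hne (fun j => min (μ {p (2*j)}) (ν {p (2*j+1)}))
    with hεdef
  have hεpos : 0 < ε := by
    rw [hεdef, Finset.lt_inf'_iff]
    intro j hj
    exact lt_min (hμpos j (Finset.mem_range.mp hj)) (hνpos j (Finset.mem_range.mp hj))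
  have hεμ : ∀ j < n, ε ≤ μ {p (2*j)} := fun j hj =>
    le_trans (Finset.inf'_le _ (Finset.mem_range.mpr hj)) (min_le_left _ _)
  have hεν : ∀ j < n, ε ≤ ν {p (2*j+1)} := fun j hj =>
    le_trans (Finset.inf'_le _ (Finset.mem_range.mpr hj)) (min_le_right _ _)
  have hεfin : ε ≠ ⊤ := ne_top_of_le_ne_top (measure_ne_top μ _) (hεμ 0 (by omega))
  have hd : ∀ i j, i < 2*n → j < 2*n → i ≠ j → p i ≠ p j := by
    intro i j hi hj hij hpij
    exact hij (hinj (Set.mem_Iio.mpr hi) (Set.mem_Iio.mpr hj) hpij)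
  have hEμ : (ε • ∑ j ∈ Finset.range n, Measure.dirac (p (2*j)) : Measure (ℝ × ℝ)) ≤ μ :=
    key_le ε n _ μ (fun i hi j hj hij => hd (2*i) (2*j) (by omega) (by omega) (by omega)) hεμ
  have hOν : (ε • ∑ j ∈ Finset.range n, Measure.dirac (p (2*j+1)) : Measure (ℝ × ℝ)) ≤ ν :=
    key_le ε n _ ν (fun i hi j hj hij => hd (2*i+1) (2*j+1) (by omega) (by omega) (by omega)) hεν
  haveI : IsFiniteMeasure
      (ε • ∑ j ∈ Finset.range n, Measure.dirac (p (2*j)) : Measure (ℝ × ℝ)) :=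
    ⟨lt_of_le_of_lt (hEμ Set.univ) (measure_lt_top μ _)⟩
  haveI : IsFiniteMeasure
      (ε • ∑ j ∈ Finset.range n, Measure.dirac (p (2*j+1)) : Measure (ℝ × ℝ)) :=
    ⟨lt_of_le_of_lt (hOν Set.univ) (measure_lt_top ν _)⟩
  have hμc : (μ - ε • ∑ j ∈ Finset.range n, Measure.dirac (p (2*j)))
      + ε • ∑ j ∈ Finset.range n, Measure.dirac (p (2*j)) = μ :=
    Measure.sub_add_cancel_of_le hEμ
  have hνc : (ν - ε • ∑ j ∈ Finset.range n, Measure.dirac (p (2*j+1)))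
      + ε • ∑ j ∈ Finset.range n, Measure.dirac (p (2*j+1)) = ν :=
    Measure.sub_add_cancel_of_le hOν
  haveI : IsFiniteMeasure (μ - ε • ∑ j ∈ Finset.range n, Measure.dirac (p (2*j))) :=
    ⟨lt_of_le_of_lt (Measure.sub_le Set.univ) (measure_lt_top μ _)⟩
  haveI : IsFiniteMeasure (ν - ε • ∑ j ∈ Finset.range n, Measure.dirac (p (2*j+1))) :=
    ⟨lt_of_le_of_lt (Measure.sub_le Set.univ) (measure_lt_top ν _)⟩
  have hμsubS : (μ - ε • ∑ j ∈ Finset.range n, Measure.dirac (p (2*j)))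
      ((↑S : Set (ℝ × ℝ)))ᶜ = 0 :=
    le_antisymm (le_trans (Measure.sub_le _) hμS.le) (zero_le)
  have hνsubS : (ν - ε • ∑ j ∈ Finset.range n, Measure.dirac (p (2*j+1)))
      ((↑S : Set (ℝ × ℝ)))ᶜ = 0 :=
    le_antisymm (le_trans (Measure.sub_le _) hνS.le) (zero_le)
  -- combinatorial identities
  have hpair : ∀ (A : Set ℝ) (a : ℕ → ℝ),
      (∑ j ∈ Finset.range n, (if a j ∈ A then (1 - a j) else 0)) +
      (∑ j ∈ Finset.range n, (if a j ∈ A then a j else 0)) =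
      ∑ j ∈ Finset.range n, (if a j ∈ A then (1:ℝ) else 0) := by
    intro A a
    rw [← Finset.sum_add_distrib]
    apply Finset.sum_congr rfl
    intro j _
    split_ifs <;> simp
  have hchix : ∀ (A : Set ℝ),
      (∑ j ∈ Finset.range n, (if (p (2*j+1)).1 ∈ A then (1:ℝ) else 0)) =
      ∑ j ∈ Finset.range n, (if (p (2*j)).1 ∈ A then (1:ℝ) else 0) := by
    intro A
    have h1 : ∀ j ∈ Finset.range n,
        (if (p (2*j+1)).1 ∈ A then (1:ℝ) else 0) =
        (fun k => if (p (2*k)).1 ∈ A then (1:ℝ) else 0) (j+1) := by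
      intro j hj
      have h := hx j (Finset.mem_range.mp hj)
      simp only
      rw [show 2*(j+1) = 2*j+2 by ring, ← h]
    rw [Finset.sum_congr rfl h1]
    exact reindex_sum n (fun k => if (p (2*k)).1 ∈ A then (1:ℝ) else 0) (by
      show (if (p (2*n)).1 ∈ A then (1:ℝ) else 0) = (if (p (2*0)).1 ∈ A then (1:ℝ) else 0)
      rw [hcyc])
  have hchiy : ∀ (A : Set ℝ),
      (∑ j ∈ Finset.range n, (if (p (2*j+1)).2 ∈ A then (1:ℝ) else 0)) =
      ∑ j ∈ Finset.range n, (if (p (2*j)).2 ∈ A then (1:ℝ) else 0) := by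
    intro A
    apply Finset.sum_congr rfl
    intro j hj
    rw [hy j (Finset.mem_range.mp hj)]
  -- the perturbed pair is in R
  have hmem : MemR
      ((μ - ε • ∑ j ∈ Finset.range n, Measure.dirac (p (2*j)))
        + ε • ∑ j ∈ Finset.range n, Measure.dirac (p (2*j+1)))
      ((ν - ε • ∑ j ∈ Finset.range n, Measure.dirac (p (2*j+1)))
        + ε • ∑ j ∈ Finset.range n, Measure.dirac (p (2*j))) := by
    intro A hA
    constructor
    · -- fst coordinate
      have a1 := marg ε hεfin n (fun j => p (2*j+1))
        (μ - ε • ∑ j ∈ Finset.range n, Measure.dirac (p (2*j))) S hμsubS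
        Prod.fst measurable_fst A hA (fun x => 1 - x)
      have a2 := marg ε hεfin n (fun j => p (2*j))
        (μ - ε • ∑ j ∈ Finset.range n, Measure.dirac (p (2*j))) S hμsubS
        Prod.fst measurable_fst A hA (fun x => 1 - x)
      rw [hμc] at a2
      have b1 := marg ε hεfin n (fun j => p (2*j))
        (ν - ε • ∑ j ∈ Finset.range n, Measure.dirac (p (2*j+1))) S hνsubS
        Prod.fst measurable_fst A hA (fun x => x)
      have b2 := marg ε hεfin n (fun j => p (2*j+1))
        (ν - ε • ∑ j ∈ Finset.range n, Measure.dirac (p (2*j+1))) S hνsubS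
        Prod.fst measurable_fst A hA (fun x => x)
      rw [hνc] at b2
      have hRA := (hR A hA).1
      have key : (∑ j ∈ Finset.range n, (if (p (2*j+1)).1 ∈ A then (1 - (p (2*j+1)).1) else 0)) +
          (∑ j ∈ Finset.range n, (if (p (2*j+1)).1 ∈ A then (p (2*j+1)).1 else 0)) =
          (∑ j ∈ Finset.range n, (if (p (2*j)).1 ∈ A then (1 - (p (2*j)).1) else 0)) +
          (∑ j ∈ Finset.range n, (if (p (2*j)).1 ∈ A then (p (2*j)).1 else 0)) := by
        rw [hpair A (fun j => (p (2*j+1)).1), hpair A (fun j => (p (2*j)).1)]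
        exact hchix A
      have key' : ε.toReal * (∑ j ∈ Finset.range n, (if (p (2*j+1)).1 ∈ A then (1 - (p (2*j+1)).1) else 0)) +
          ε.toReal * (∑ j ∈ Finset.range n, (if (p (2*j+1)).1 ∈ A then (p (2*j+1)).1 else 0)) =
          ε.toReal * (∑ j ∈ Finset.range n, (if (p (2*j)).1 ∈ A then (1 - (p (2*j)).1) else 0)) +
          ε.toReal * (∑ j ∈ Finset.range n, (if (p (2*j)).1 ∈ A then (p (2*j)).1 else 0)) := by
        rw [← mul_add, ← mul_add, key]
      rw [a1, b1]
      linarith [a2, b2, hRA, key']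
    · -- snd coordinate
      have a1 := marg ε hεfin n (fun j => p (2*j+1))
        (μ - ε • ∑ j ∈ Finset.range n, Measure.dirac (p (2*j))) S hμsubS
        Prod.snd measurable_snd A hA (fun x => 1 - x)
      have a2 := marg ε hεfin n (fun j => p (2*j))
        (μ - ε • ∑ j ∈ Finset.range n, Measure.dirac (p (2*j))) S hμsubS
        Prod.snd measurable_snd A hA (fun x => 1 - x)
      rw [hμc] at a2
      have b1 := marg ε hεfin n (fun j => p (2*j))
        (ν - ε • ∑ j ∈ Finset.range n, Measure.dirac (p (2*j+1))) S hνsubS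
        Prod.snd measurable_snd A hA (fun x => x)
      have b2 := marg ε hεfin n (fun j => p (2*j+1))
        (ν - ε • ∑ j ∈ Finset.range n, Measure.dirac (p (2*j+1))) S hνsubS
        Prod.snd measurable_snd A hA (fun x => x)
      rw [hνc] at b2
      have hRA := (hR A hA).2
      have key : (∑ j ∈ Finset.range n, (if (p (2*j+1)).2 ∈ A then (1 - (p (2*j+1)).2) else 0)) +
          (∑ j ∈ Finset.range n, (if (p (2*j+1)).2 ∈ A then (p (2*j+1)).2 else 0)) =
          (∑ j ∈ Finset.range n, (if (p (2*j)).2 ∈ A then (1 - (p (2*j)).2) else 0)) +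
          (∑ j ∈ Finset.range n, (if (p (2*j)).2 ∈ A then (p (2*j)).2 else 0)) := by
        rw [hpair A (fun j => (p (2*j+1)).2), hpair A (fun j => (p (2*j)).2)]
        exact hchiy A
      have key' : ε.toReal * (∑ j ∈ Finset.range n, (if (p (2*j+1)).2 ∈ A then (1 - (p (2*j+1)).2) else 0)) +
          ε.toReal * (∑ j ∈ Finset.range n, (if (p (2*j+1)).2 ∈ A then (p (2*j+1)).2 else 0)) =
          ε.toReal * (∑ j ∈ Finset.range n, (if (p (2*j)).2 ∈ A then (1 - (p (2*j)).2) else 0)) +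
          ε.toReal * (∑ j ∈ Finset.range n, (if (p (2*j)).2 ∈ A then (p (2*j)).2 else 0)) := by
        rw [← mul_add, ← mul_add, key]
      rw [a1, b1]
      linarith [a2, b2, hRA, key']
  have hsum : η =
      ((μ - ε • ∑ j ∈ Finset.range n, Measure.dirac (p (2*j)))
        + ε • ∑ j ∈ Finset.range n, Measure.dirac (p (2*j+1)))
      + ((ν - ε • ∑ j ∈ Finset.range n, Measure.dirac (p (2*j+1)))
        + ε • ∑ j ∈ Finset.range n, Measure.dirac (p (2*j))) := by
    rw [hrep]
    calc μ + ν
        = ((μ - ε • ∑ j ∈ Finset.range n, Measure.dirac (p (2*j)))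
            + ε • ∑ j ∈ Finset.range n, Measure.dirac (p (2*j)))
          + ((ν - ε • ∑ j ∈ Finset.range n, Measure.dirac (p (2*j+1)))
            + ε • ∑ j ∈ Finset.range n, Measure.dirac (p (2*j+1))) := by rw [hμc, hνc]
      _ = _ := by
          rw [add_add_add_comm, add_add_add_comm
            (μ - ε • ∑ j ∈ Finset.range n, Measure.dirac (p (2*j)))
            (ε • ∑ j ∈ Finset.range n, Measure.dirac (p (2*j+1)))
            (ν - ε • ∑ j ∈ Finset.range n, Measure.dirac (p (2*j+1)))
            (ε • ∑ j ∈ Finset.range n, Measure.dirac (p (2*j))),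
            add_comm (ε • ∑ j ∈ Finset.range n, Measure.dirac (p (2*j)) : Measure (ℝ × ℝ))
              (ε • ∑ j ∈ Finset.range n, Measure.dirac (p (2*j+1)) : Measure (ℝ × ℝ))]
  obtain ⟨hμ'μ, -⟩ := huniq _ _ hmem hsum
  -- evaluate at {p 1}
  have hE0 : (∑ j ∈ Finset.range n, Measure.dirac (p (2*j)) : Measure (ℝ × ℝ)) {p 1} = 0 := by
    rw [Measure.finset_sum_apply]
    apply Finset.sum_eq_zero
    intro j hj
    rw [Measure.dirac_apply' _ (measurableSet_singleton _)]
    apply Set.indicator_of_notMem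
    simp only [Set.mem_singleton_iff]
    exact hd (2*j) 1 (by have := Finset.mem_range.mp hj; omega) (by omega)
      (by have := Finset.mem_range.mp hj; omega)
  have hO1 : (1 : ℝ≥0∞) ≤ (∑ j ∈ Finset.range n, Measure.dirac (p (2*j+1)) : Measure (ℝ × ℝ)) {p 1} := by
    rw [Measure.finset_sum_apply]
    have h0 : (0:ℕ) ∈ Finset.range n := Finset.mem_range.mpr (by omega)
    refine le_trans ?_ (Finset.single_le_sum (fun j _ => zero_le) h0)
    rw [Measure.dirac_apply' _ (measurableSet_singleton _)]
    simp
  have hμsub1 : (μ - ε • ∑ j ∈ Finset.range n, Measure.dirac (p (2*j))) {p 1} = μ {p 1} := by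
    have := congrArg (fun m : Measure (ℝ × ℝ) => m {p 1}) hμc
    simp only [Measure.add_apply, Measure.smul_apply, smul_eq_mul] at this
    rw [hE0, mul_zero, add_zero] at this
    exact this
  have hlt : μ {p 1} <
      ((μ - ε • ∑ j ∈ Finset.range n, Measure.dirac (p (2*j)))
        + ε • ∑ j ∈ Finset.range n, Measure.dirac (p (2*j+1))) {p 1} := by
    rw [Measure.add_apply, Measure.smul_apply, smul_eq_mul, hμsub1]
    calc μ {p 1} < μ {p 1} + ε := ENNReal.lt_add_right (measure_ne_top μ _) hεpos.ne'
      _ ≤ μ {p 1} + ε * (∑ j ∈ Finset.range n, Measure.dirac (p (2*j+1)) : Measure (ℝ × ℝ)) {p 1} := by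
          apply add_le_add_right
          conv_lhs => rw [← mul_one ε]
          exact mul_le_mul_right hO1 ε
  rw [hμ'μ] at hlt
  exact lt_irrefl _ hlt
end
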